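/- arXiv:1810.07630 — 8 statements merged into one kernel-verified Lean document; each statement's English description precedes it below -/
import Mathlib

section
/- Any nonzero codeword of a constacyclic code of length n and dimension k has Hamming weight at least n/k; hence the minimum distance of the code is at least n/k. -/
open Polynomial

noncomputable section

def shiftBy {F : Type*} [Field F] {n : ℕ} (a : F) (c : Fin n → F) : Fin n → F :=
  fun i => if _h : (i : ℕ) = 0 then a * c ⟨n - 1, by have := i.isLt; omega⟩
           else c ⟨(i : ℕ) - 1, by have := i.isLt; omega⟩

def codeOf {F : Type*} [Field F] (n : ℕ) (a : F) (g : F[X]) : Set (Fin n → F) :=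
  {v | ∃ h : F[X], ∀ i : Fin n, v i = ((g * h) %ₘ (X ^ n - C a)).coeff i}

def schurPow {F : Type*} [Field F] {n : ℕ} (W : Submodule F (Fin n → F)) : ℕ → Submodule F (Fin n → F)
  | 0 => W
  | 1 => W
  | (i+2) => Submodule.span F {x | ∃ c ∈ W, ∃ d ∈ schurPow W (i+1), x = c * d}

def wt {F : Type*} [Field F] {n : ℕ} (c : Fin n → F) : ℕ := {i | c i ≠ 0}.ncard

def dminW {F : Type*} [Field F] {n : ℕ} (W : Submodule F (Fin n → F)) : ℕ :=
  sInf {w | ∃ c ∈ W, c ≠ 0 ∧ wt c = w}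

def toPoly {F : Type*} [Field F] {n : ℕ} (c : Fin n → F) : F[X] :=
  ∑ i : Fin n, Polynomial.C (c i) * X ^ (i : ℕ)

lemma toPoly_coeff' {F : Type*} [Field F] {n : ℕ} (c : Fin n → F) (m : ℕ) :
    (∑ i : Fin n, Polynomial.C (c i) * X ^ (i : ℕ)).coeff m =
      if h : m < n then c ⟨m, h⟩ else 0 := by
  rw [Polynomial.finset_sum_coeff]
  simp only [coeff_C_mul, coeff_X_pow]
  split
  · next h =>
    rw [Finset.sum_eq_single (⟨m, h⟩ : Fin n)]
    · simp
    · intro b _ hb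
      simp only [mul_ite, mul_one, mul_zero, ite_eq_right_iff]
      intro he; exact absurd (Fin.ext he.symm) hb
    · simp
  · next h =>
    apply Finset.sum_eq_zero
    intro b _
    simp only [mul_ite, mul_one, mul_zero, ite_eq_right_iff]
    intro he; exact absurd (he ▸ b.isLt) h

lemma mod_shift_coeff {F : Type*} [Field F] {n : ℕ} (hn : 0 < n) (a : F) (P : F[X])
    (hP : P.degree < (n : ℕ)) (i : ℕ) (hi : i < n) :
    ((X * P) %ₘ (X ^ n - C a)).coeff i =
      if i = 0 then a * P.coeff (n - 1) else P.coeff (i - 1) := by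
  have hM : (X ^ n - C a).Monic := monic_X_pow_sub_C a hn.ne'
  set t := P.coeff (n - 1) with ht
  set R : F[X] := X * P - C t * (X ^ n - C a) with hR
  have hXP : X * P = R + (X ^ n - C a) * C t := by ring
  have hRcoeff : ∀ m : ℕ, R.coeff m =
      (X * P).coeff m - t * ((if m = n then (1:F) else 0) - (if m = 0 then a else 0)) := by
    intro m
    simp [hR, coeff_sub, coeff_C_mul, coeff_X_pow, coeff_C]
  have hPz : ∀ m : ℕ, n ≤ m → P.coeff m = 0 := fun m hm =>
    coeff_eq_zero_of_degree_lt (lt_of_lt_of_le hP (by exact_mod_cast hm))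
  have hRdeg : R.degree < (n : ℕ) := by
    rw [degree_lt_iff_coeff_zero]
    intro m hm
    rw [hRcoeff]
    obtain ⟨m', rfl⟩ : ∃ m', m = m' + 1 := ⟨m - 1, by omega⟩
    rw [coeff_X_mul]
    rcases eq_or_lt_of_le hm with he | hlt
    · rw [← he, ht, (by omega : n - 1 = m'), if_pos rfl, if_neg hn.ne']
      ring
    · rw [hPz m' (by omega), if_neg (by omega : ¬ m' + 1 = n), if_neg (by omega : ¬ m' + 1 = 0)]
      ring
  have hmod : (X * P) %ₘ (X ^ n - C a) = R := by
    rw [hXP, add_modByMonic, mul_comm, Polynomial.mul_self_modByMonic hM, add_zero,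
      (modByMonic_eq_self_iff hM).mpr]
    rwa [degree_X_pow_sub_C hn]
  rw [hmod, hRcoeff]
  rcases Nat.eq_zero_or_pos i with rfl | hipos
  · simp only [coeff_X_mul_zero, if_pos rfl, if_neg (by omega : ¬ (0:ℕ) = n)]
    simp [mul_comm]
  · obtain ⟨i', rfl⟩ : ∃ i', i = i' + 1 := ⟨i - 1, by omega⟩
    rw [coeff_X_mul, if_neg (by omega : ¬ i' + 1 = n), if_neg (by omega : ¬ i' + 1 = 0),
      if_neg (by omega : ¬ i' + 1 = 0)]
    simp

def predF {n : ℕ} (i : Fin n) : Fin n :=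
  if _h : (i : ℕ) = 0 then ⟨n - 1, by have := i.isLt; omega⟩
  else ⟨(i : ℕ) - 1, by have := i.isLt; omega⟩

lemma shiftBy_ne_iff {F : Type*} [Field F] {n : ℕ} {a : F} (ha : a ≠ 0) (v : Fin n → F)
    (i : Fin n) : shiftBy a v i ≠ 0 ↔ v (predF i) ≠ 0 := by
  unfold shiftBy predF
  split <;> simp [ha]

lemma predF_val {n : ℕ} (hn : 0 < n) (i : Fin n) :
    (predF i : ℕ) = ((i : ℕ) + (n - 1)) % n := by
  have hi := i.isLt
  unfold predF
  split
  · next h => simp only [h, zero_add]; exact (Nat.mod_eq_of_lt (by omega)).symm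
  · next h =>
    simp only
    rw [(by omega : (i : ℕ) + (n - 1) = ((i : ℕ) - 1) + n), Nat.add_mod_right,
      Nat.mod_eq_of_lt (by omega)]

lemma predF_inj {n : ℕ} : Function.Injective (predF (n := n)) := by
  rcases Nat.eq_zero_or_pos n with rfl | hn
  · intro i; exact absurd i.isLt (by omega)
  intro i j hij
  have hi := i.isLt; have hj := j.isLt
  have h := congrArg Fin.val hij
  rw [predF_val hn, predF_val hn] at h
  apply Fin.ext
  rcases Nat.lt_or_ge ((i:ℕ) + (n-1)) n with h1 | h1 <;>
    rcases Nat.lt_or_ge ((j:ℕ) + (n-1)) n with h2 | h2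
  · rw [Nat.mod_eq_of_lt h1, Nat.mod_eq_of_lt h2] at h; omega
  · rw [Nat.mod_eq_of_lt h1, (by omega : (j:ℕ) + (n-1) = ((j:ℕ) - 1) + n),
      Nat.add_mod_right, Nat.mod_eq_of_lt (by omega)] at h; omega
  · rw [Nat.mod_eq_of_lt h2, (by omega : (i:ℕ) + (n-1) = ((i:ℕ) - 1) + n),
      Nat.add_mod_right, Nat.mod_eq_of_lt (by omega)] at h; omega
  · rw [(by omega : (i:ℕ) + (n-1) = ((i:ℕ) - 1) + n), Nat.add_mod_right,
      Nat.mod_eq_of_lt (by omega), (by omega : (j:ℕ) + (n-1) = ((j:ℕ) - 1) + n),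
      Nat.add_mod_right, Nat.mod_eq_of_lt (by omega)] at h; omega

lemma predF_iterate {n : ℕ} (hn : 0 < n) (i : Fin n) (j : ℕ) :
    predF^[j] i = ⟨((i : ℕ) + j * (n - 1)) % n, Nat.mod_lt _ hn⟩ := by
  induction j with
  | zero => apply Fin.ext; simp [Nat.mod_eq_of_lt i.isLt]
  | succ j ih =>
    apply Fin.ext
    rw [Function.iterate_succ_apply', predF_val hn, ih]
    show (((i:ℕ) + j * (n - 1)) % n + (n - 1)) % n = _
    rw [Nat.mod_add_mod, add_mul, one_mul, ← add_assoc]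

lemma coverage {n : ℕ} (hn : 0 < n) (i i0 : Fin n) :
    ∃ j : ℕ, predF^[j] i = i0 := by
  refine ⟨n + (i : ℕ) - (i0 : ℕ), ?_⟩
  rw [predF_iterate hn]
  apply Fin.ext
  have h0 := i0.isLt; have h1 := i.isLt
  have key : (i : ℕ) + (n + (i : ℕ) - (i0 : ℕ)) * (n - 1)
      = (i0 : ℕ) + (n + (i : ℕ) - (i0 : ℕ) - 1) * n := by
    zify [(by omega : (i0:ℕ) ≤ n + (i:ℕ)), (by omega : 1 ≤ n),
      (by omega : 1 ≤ n + (i:ℕ) - (i0:ℕ))]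
    ring
  simp only [key, Nat.add_mul_mod_self_right]
  exact Nat.mod_eq_of_lt h0

lemma wt_eq_card {F : Type*} [Field F] {n : ℕ} (v : Fin n → F)
    [DecidablePred fun i => v i ≠ 0] :
    wt v = Finset.card (Finset.univ.filter (fun i => v i ≠ 0)) := by
  classical
  rw [wt, Set.ncard_eq_toFinset_card']
  simp [Set.toFinset_setOf]

lemma wt_shift_le {F : Type*} [Field F] {n : ℕ} {a : F} (ha : a ≠ 0) (v : Fin n → F) :
    wt (shiftBy a v) ≤ wt v := by
  classical
  rw [wt_eq_card, wt_eq_card]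
  apply Finset.card_le_card_of_injOn predF
  · intro i hi
    simp only [Finset.coe_filter, Finset.mem_filter, Finset.mem_univ, true_and, Set.mem_setOf_eq] at *
    exact (shiftBy_ne_iff ha v i).mp hi
  · exact predF_inj.injOn

lemma shift_iter_ne {F : Type*} [Field F] {n : ℕ} {a : F} (ha : a ≠ 0) (v : Fin n → F)
    (j : ℕ) : ∀ i : Fin n, (shiftBy a)^[j] v i ≠ 0 ↔ v (predF^[j] i) ≠ 0 := by
  induction j with
  | zero => intro i; simp
  | succ j ih =>
    intro i
    rw [Function.iterate_succ_apply', shiftBy_ne_iff ha, ih (predF i),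
      ← Function.iterate_succ_apply]

lemma shift_mem_code {F : Type*} [Field F] {n : ℕ} (hn : 0 < n) (a : F) (g : F[X])
    {v : Fin n → F} (hv : v ∈ codeOf n a g) : shiftBy a v ∈ codeOf n a g := by
  obtain ⟨h, hvh⟩ := hv
  have hM : (X ^ n - C a).Monic := monic_X_pow_sub_C a hn.ne'
  set M := X ^ n - C a with hMdef
  set P := (g * h) %ₘ M with hPdef
  have hPdeg : P.degree < (n : ℕ) := by
    have := degree_modByMonic_lt (g * h) hM
    rwa [degree_X_pow_sub_C hn] at this
  refine ⟨X * h, fun i => ?_⟩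
  have key : g * (X * h) = X * P + M * (X * ((g * h) /ₘ M)) := by
    have := modByMonic_add_div (g * h) M
    calc g * (X * h) = X * (g * h) := by ring
    _ = X * (P + M * ((g * h) /ₘ M)) := by rw [hPdef, this]
    _ = X * P + M * (X * ((g * h) /ₘ M)) := by ring
  rw [key, add_modByMonic, mul_comm M, Polynomial.mul_self_modByMonic hM, add_zero,
    mod_shift_coeff hn a P hPdeg i i.isLt]
  unfold shiftBy
  split
  · rw [hvh]
  · rw [hvh]

lemma code_subset_range {F : Type*} [Field F] {n k : ℕ} (hk : 0 < k) (hkn : k ≤ n)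
    (a : F) (g : F[X]) (hgdvd : g ∣ X ^ n - C a) (hgdeg : g.natDegree = n - k) :
    ∃ φ : (Fin k → F) →ₗ[F] (Fin n → F), codeOf n a g ⊆ Set.range φ := by
  have hn : 0 < n := lt_of_lt_of_le hk hkn
  have hM : (X ^ n - C a).Monic := monic_X_pow_sub_C a hn.ne'
  refine ⟨{ toFun := fun q => fun i => (g * ∑ j : Fin k, C (q j) * X ^ (j : ℕ)).coeff (i : ℕ)
            map_add' := ?_
            map_smul' := ?_ }, ?_⟩
  · intro q r
    funext i
    simp [C_add, add_mul, Finset.sum_add_distrib, mul_add]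
  · intro t q
    funext i
    simp only [Pi.smul_apply, smul_eq_mul, RingHom.id_apply]
    have hs : (∑ j : Fin k, C (t * q j) * X ^ (j : ℕ))
        = C t * ∑ j : Fin k, C (q j) * X ^ (j : ℕ) := by
      rw [Finset.mul_sum]
      exact Finset.sum_congr rfl fun j _ => by rw [C_mul, mul_assoc]
    rw [hs, mul_left_comm, coeff_C_mul]
  · rintro v ⟨h, hv⟩
    set M := X ^ n - C a with hMdef
    set R := (g * h) %ₘ M with hRdef
    have hgR : g ∣ R := by
      rw [hRdef, modByMonic_eq_sub_mul_div _ M]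
      exact dvd_sub (Dvd.intro h rfl) (dvd_mul_of_dvd_left hgdvd _)
    obtain ⟨q, hq⟩ := hgR
    by_cases hR : R = 0
    · refine ⟨0, ?_⟩
      funext i
      simp only [LinearMap.coe_mk, AddHom.coe_mk]
      rw [hv i, hR, coeff_zero]
      simp
    · have hg0 : g ≠ 0 := fun h0 => hR (by rw [hq, h0, zero_mul])
      have hq0 : q ≠ 0 := fun h0 => hR (by rw [hq, h0, mul_zero])
      have hdegR : R.natDegree < n := by
        rw [natDegree_lt_iff_degree_lt hR]
        have := degree_modByMonic_lt (g * h) hM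
        rwa [hMdef, degree_X_pow_sub_C hn] at this
      have hmul : R.natDegree = g.natDegree + q.natDegree := by
        rw [hq, natDegree_mul hg0 hq0]
      have hqk : q.natDegree < k := by omega
      refine ⟨fun j => q.coeff (j : ℕ), ?_⟩
      have hsum : (∑ j : Fin k, C (q.coeff (j : ℕ)) * X ^ (j : ℕ)) = q := by
        ext m
        rw [toPoly_coeff']
        split
        · rfl
        · next hmk => exact (coeff_eq_zero_of_natDegree_lt (by omega)).symm
      funext i
      simp only [LinearMap.coe_mk, AddHom.coe_mk]
      rw [hsum, hv i, hq]


/-- Any nonzero codeword of a constacyclic code of length n and dimension k has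
Hamming weight at least n/k (i.e. n ≤ k * wt c); hence the minimum distance is at least n/k. -/
theorem stmt2 {F : Type*} [Field F] [Fintype F] {n k : ℕ} (hk : 0 < k) (hkn : k ≤ n)
    (a : F) (ha : a ≠ 0) (g : F[X]) (hgdvd : g ∣ X ^ n - C a) (hgdeg : g.natDegree = n - k) :
    (∀ c ∈ codeOf n a g, c ≠ 0 → n ≤ k * wt c) ∧
      ((∃ c ∈ codeOf n a g, c ≠ 0) →
        n ≤ k * sInf {w | ∃ c ∈ codeOf n a g, c ≠ 0 ∧ wt c = w}) := by
  classical
  have hn : 0 < n := lt_of_lt_of_le hk hkn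
  have main : ∀ c ∈ codeOf n a g, c ≠ 0 → n ≤ k * wt c := by
    intro c hc hc0
    obtain ⟨φ, hφ⟩ := code_subset_range hk hkn a g hgdvd hgdeg
    set s : Set (Fin n → F) := Set.range (fun j : ℕ => (shiftBy a)^[j] c) with hs
    have hmem : ∀ j : ℕ, (shiftBy a)^[j] c ∈ codeOf n a g := by
      intro j
      induction j with
      | zero => simpa using hc
      | succ j ih => rw [Function.iterate_succ_apply']; exact shift_mem_code hn a g ih
    have hwt : ∀ j : ℕ, wt ((shiftBy a)^[j] c) ≤ wt c := by
      intro j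
      induction j with
      | zero => simp
      | succ j ih =>
        rw [Function.iterate_succ_apply']
        exact le_trans (wt_shift_le ha _) ih
    have hs_code : s ⊆ codeOf n a g := by rintro _ ⟨j, rfl⟩; exact hmem j
    obtain ⟨b, hbs, hspan, hbind⟩ := exists_linearIndependent F s
    have hbfin : b.Finite := Set.finite_coe_iff.mp hbind.finite
    haveI : Fintype b := hbfin.fintype
    set bF : Finset (Fin n → F) := b.toFinset with hbF
    have hmem_bF : ∀ u : Fin n → F, u ∈ bF ↔ u ∈ b := fun u => Set.mem_toFinset
    -- coverage: every coordinate is hit by some element of b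
    have hcov : ∀ i : Fin n, ∃ u ∈ b, u i ≠ 0 := by
      intro i
      obtain ⟨i0, hi0⟩ : ∃ i0, c i0 ≠ 0 := by
        by_contra hall
        push_neg at hall
        exact hc0 (funext fun x => hall x)
      obtain ⟨j, hj⟩ := coverage hn i i0
      have hvne : (shiftBy a)^[j] c i ≠ 0 := by
        rw [shift_iter_ne ha c j i, hj]; exact hi0
      by_contra hall
      push_neg at hall
      have hle : Submodule.span F b ≤
          LinearMap.ker (LinearMap.proj (R := F) (φ := fun _ : Fin n => F) i) := by
        rw [Submodule.span_le]
        intro u hu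
        simp only [SetLike.mem_coe, LinearMap.mem_ker, LinearMap.proj_apply]
        exact hall u hu
      have hv_in : (shiftBy a)^[j] c ∈ Submodule.span F s :=
        Submodule.subset_span ⟨j, rfl⟩
      rw [← hspan] at hv_in
      have := hle hv_in
      simp only [LinearMap.mem_ker, LinearMap.proj_apply] at this
      exact hvne this
    -- cardinality of b is at most k
    have hbk : bF.card ≤ k := by
      have h1 : Module.finrank F (Submodule.span F b) = bF.card :=
        finrank_span_set_eq_card hbind
      have h2 : Submodule.span F b ≤ LinearMap.range φ := by
        rw [Submodule.span_le]
        intro u hu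
        have : u ∈ Set.range φ := hφ (hs_code (hbs hu))
        simpa [LinearMap.mem_range] using this
      have h3 := Submodule.finrank_mono h2
      have h4 := LinearMap.finrank_range_le φ
      have h5 : Module.finrank F (Fin k → F) = k := by simp
      omega
    -- counting
    have hcount : n ≤ bF.card * wt c := by
      have step1 : (Finset.univ : Finset (Fin n)) ⊆
          bF.biUnion (fun u => Finset.univ.filter (fun i => u i ≠ 0)) := by
        intro i _
        obtain ⟨u, hu, hui⟩ := hcov i
        exact Finset.mem_biUnion.mpr ⟨u, (hmem_bF u).mpr hu,
          Finset.mem_filter.mpr ⟨Finset.mem_univ _, hui⟩⟩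
      calc n = (Finset.univ : Finset (Fin n)).card := by simp
        _ ≤ (bF.biUnion (fun u => Finset.univ.filter (fun i => u i ≠ 0))).card :=
            Finset.card_le_card step1
        _ ≤ ∑ u ∈ bF, (Finset.univ.filter (fun i => u i ≠ 0)).card :=
            Finset.card_biUnion_le
        _ ≤ bF.card * wt c := by
            rw [← smul_eq_mul]
            apply Finset.sum_le_card_nsmul
            intro u hu
            rw [← wt_eq_card u]
            obtain ⟨j, rfl⟩ := hbs ((hmem_bF u).mp hu)
            exact hwt j
    calc n ≤ bF.card * wt c := hcount
      _ ≤ k * wt c := Nat.mul_le_mul_right _ hbk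
  refine ⟨main, ?_⟩
  rintro ⟨c, hc, hc0⟩
  have hne : {w | ∃ c ∈ codeOf n a g, c ≠ 0 ∧ wt c = w}.Nonempty := ⟨wt c, c, hc, hc0, rfl⟩
  obtain ⟨c', hc', h0', hw⟩ := Nat.sInf_mem hne
  rw [← hw]
  exact main c' hc' h0'
end
end

section
/- If a codeword c of a constacyclic code of length n and dimension k (with k dividing n) has Hamming weight exactly n/k and its first nonzero coordinate is at position p, then the support of c is exactly {p + z·k : 0 ≤ z < n/k}. -/
open Polynomial

noncomputable section

lemma shiftIter {F : Type*} [Field F] {n : ℕ} (hn : 0 < n) (a : F)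
    (g : F[X]) (hg : g ∣ X ^ n - C a) (f : F[X]) (hgf : g ∣ f)
    (hfd : ∀ j, n ≤ j → f.coeff j = 0) (ha : a ≠ 0) (m : ℕ) :
    ∃ fm : F[X], g ∣ fm ∧ (∀ j, n ≤ j → fm.coeff j = 0) ∧
      ∀ j, j < n → (fm.coeff j ≠ 0 ↔ f.coeff ((j + m * (n - 1)) % n) ≠ 0) := by
  induction m with
  | zero =>
    refine ⟨f, hgf, hfd, fun j hj => ?_⟩
    rw [Nat.zero_mul, Nat.add_zero, Nat.mod_eq_of_lt hj]
  | succ m ih =>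
    obtain ⟨fm, hdvd, hbd, hco⟩ := ih
    refine ⟨X * fm - C (fm.coeff (n - 1)) * (X ^ n - C a), ?_, ?_, ?_⟩
    · exact dvd_sub (Dvd.dvd.mul_left hdvd X) (Dvd.dvd.mul_left hg _)
    · intro j hj
      rw [coeff_sub, coeff_C_mul, coeff_sub, coeff_X_pow, coeff_C]
      rcases Nat.lt_or_ge n j with h | h
      · obtain ⟨j, rfl⟩ : ∃ j', j = j' + 1 := ⟨j - 1, by omega⟩
        rw [coeff_X_mul, hbd _ (by omega), if_neg (by omega), if_neg (by omega)]
        ring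
      · have hj1 : j = (n - 1) + 1 := by omega
        rw [hj1, coeff_X_mul, if_pos (by omega), if_neg (by omega)]
        ring
    · intro j hj
      rw [coeff_sub, coeff_C_mul, coeff_sub, coeff_X_pow, coeff_C]
      rcases Nat.eq_zero_or_pos j with rfl | hjpos
      · rw [mul_coeff_zero, coeff_X_zero, if_neg (by omega), if_pos rfl, zero_mul]
        have h1 := hco (n - 1) (by omega)
        have harith : (n - 1 + m * (n - 1)) % n = ((0 + (m + 1) * (n - 1))) % n := by
          congr 1; ring_nf
        rw [harith] at h1
        have heq : (0:F) - fm.coeff (n - 1) * (0 - a) = fm.coeff (n - 1) * a := by ring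
        rw [heq, mul_ne_zero_iff, and_iff_left ha, h1]
      · obtain ⟨j, rfl⟩ : ∃ j', j = j' + 1 := ⟨j - 1, by omega⟩
        rw [coeff_X_mul, if_neg (by omega), if_neg (by omega)]
        have h1 := hco j (by omega)
        have harith : (j + m * (n - 1)) % n = (j + 1 + (m + 1) * (n - 1)) % n := by
          have : j + 1 + (m + 1) * (n - 1) = (j + m * (n - 1)) + n := by
            cases n with
            | zero => omega
            | succ n' => ring_nf; omega
          rw [this, Nat.add_mod_right]
        rw [harith] at h1
        simpa using h1

lemma noWindow {F : Type*} [Field F] {n k : ℕ} (hk : 0 < k) (hkn : k ≤ n) (hn : 0 < n)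
    (a : F) (ha : a ≠ 0) (g : F[X]) (hg : g ∣ X ^ n - C a) (hgdeg : g.natDegree = n - k)
    (f : F[X]) (hgf : g ∣ f) (hfd : ∀ j, n ≤ j → f.coeff j = 0)
    (p : ℕ) (hp : p < n) (hfp : f.coeff p ≠ 0) (s : ℕ) :
    ∃ t, t < k ∧ f.coeff ((s + t) % n) ≠ 0 := by
  by_contra hcon
  push_neg at hcon
  set s' := s % n with hs'def
  have hs' : s' < n := Nat.mod_lt _ hn
  set m := 2 * n - k - s' with hmdef
  have hm1 : 1 ≤ m := by omega
  have hmz : (m : ℤ) = 2 * n - k - s' := by omega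
  obtain ⟨fm, hdvd, hbd, hco⟩ := shiftIter hn a g hg f hgf hfd ha m
  -- key index identity for the window positions
  have key : ∀ t, t < k → (n - k + t + m * (n - 1)) % n = (s + t) % n := by
    intro t ht
    have hid : n - k + t + m * (n - 1) = (t + s') + (m - 1) * n := by
      zify [hkn, hm1, show (1:ℕ) ≤ n from hn]
      linear_combination (-1 : ℤ) * hmz
    rw [hid, Nat.add_mul_mod_self_right]
    have h1 : t + s' ≡ t + s [MOD n] := Nat.ModEq.add_left t (Nat.mod_modEq s n)
    calc (t + s') % n = (t + s) % n := h1
      _ = (s + t) % n := by rw [Nat.add_comm]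
  -- fm is nonzero
  have hPlt : (p + m) % n < n := Nat.mod_lt _ hn
  have hQ : (p + m) / n ≤ m := by
    have h2 : p + m < (m + 1) * n := by
      have := Nat.le_mul_of_pos_right m hn
      nlinarith
    have := (Nat.div_lt_iff_lt_mul hn).mpr h2
    omega
  have hQR : (p + m) % n + n * ((p + m) / n) = p + m := Nat.mod_add_div _ _
  have hid2' : ∀ Q R : ℕ, Q ≤ m → R + n * Q = p + m → R + m * (n - 1) = p + (m - Q) * n := by
    intro Q R h1 h2
    zify [h1, show (1:ℕ) ≤ n from hn] at h2 ⊢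
    linear_combination h2
  have hid2 : (p + m) % n + m * (n - 1) = p + (m - (p + m) / n) * n :=
    hid2' _ _ hQ hQR
  have h3 := hco ((p + m) % n) hPlt
  rw [hid2, Nat.add_mul_mod_self_right, Nat.mod_eq_of_lt hp] at h3
  have hfmne : fm ≠ 0 := by
    intro h0
    rw [h0] at h3
    simp only [Polynomial.coeff_zero, ne_eq, not_true_eq_false] at h3
    exact hfp (by simpa using h3.symm.mp hfp)
  -- degree contradiction
  have hdeg : g.natDegree ≤ fm.natDegree := Polynomial.natDegree_le_of_dvd hdvd hfmne
  have hlead : fm.coeff fm.natDegree ≠ 0 := by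
    rw [← Polynomial.leadingCoeff]
    exact Polynomial.leadingCoeff_ne_zero.mpr hfmne
  rcases Nat.lt_or_ge fm.natDegree n with hD | hD
  · set t := fm.natDegree - (n - k) with htdef
    have ht : t < k := by omega
    have hDt : fm.natDegree = n - k + t := by omega
    have h4 := hco fm.natDegree hD
    rw [hDt, key t ht] at h4
    rw [hDt] at hlead
    exact (h4.mp (by rw [← hDt] at hlead ⊢; exact hlead)) (hcon t ht)
  · exact hlead (hbd _ hD)

/-- If a codeword of a constacyclic code of length n and dimension k (k ∣ n)
has Hamming weight exactly n/k and first nonzero coordinate at position p, then its support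
is exactly {p + z·k : 0 ≤ z < n/k}. -/
theorem stmt3 {F : Type*} [Field F] [Fintype F] {n k : ℕ} (hk : 0 < k) (hkdvd : k ∣ n)
    (a : F) (ha : a ≠ 0) (g : F[X]) (hgdvd : g ∣ X ^ n - C a) (hgdeg : g.natDegree = n - k)
    (c : Fin n → F) (hc : c ∈ codeOf n a g) (hwt : wt c = n / k)
    (p : ℕ) (hp : p < n)
    (hfirst : c ⟨p, hp⟩ ≠ 0) (hbefore : ∀ j : ℕ, ∀ _hj : j < p, c ⟨j, by omega⟩ = 0) :
    ∀ i : Fin n, c i ≠ 0 ↔ ∃ z : ℕ, z < n / k ∧ (i : ℕ) = p + z * k := by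
  classical
  have hn : 0 < n := by omega
  have hkn : k ≤ n := Nat.le_of_dvd hn hkdvd
  set w := n / k with hwdef
  have hwk : w * k = n := Nat.div_mul_cancel hkdvd
  have hw : 0 < w := by
    rcases Nat.eq_zero_or_pos w with h0 | h
    · rw [h0, Nat.zero_mul] at hwk; omega
    · exact h
  have hmk : ∀ m, m < w → m * k + k ≤ n := by
    intro m hm
    calc m * k + k = (m + 1) * k := (Nat.succ_mul m k).symm
      _ ≤ w * k := Nat.mul_le_mul_right k hm
      _ = n := hwk
  obtain ⟨h, hch⟩ := hc
  set f := (g * h) %ₘ (X ^ n - C a) with hfdef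
  have hmonic : (X ^ n - C a).Monic := monic_X_pow_sub_C a (by omega)
  have hfd : ∀ j, n ≤ j → f.coeff j = 0 := by
    intro j hj
    apply coeff_eq_zero_of_degree_lt
    calc f.degree < (X ^ n - C a).degree := degree_modByMonic_lt _ hmonic
      _ = (n : ℕ) := degree_X_pow_sub_C hn a
      _ ≤ (j : ℕ) := by exact_mod_cast Nat.cast_le.mpr hj
  have hgf : g ∣ f := by
    rw [hfdef, modByMonic_eq_sub_mul_div _ (X ^ n - C a)]
    exact dvd_sub (Dvd.dvd.mul_right dvd_rfl h) (hgdvd.mul_right _)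
  have hcoe : ∀ (j : ℕ) (hj : j < n), c ⟨j, hj⟩ = f.coeff j := fun j hj => hch ⟨j, hj⟩
  have hfp : f.coeff p ≠ 0 := by rw [← hcoe p hp]; exact hfirst
  have win : ∀ s : ℕ, ∃ t, t < k ∧ f.coeff ((s + t) % n) ≠ 0 :=
    noWindow hk hkn hn a ha g hgdvd hgdeg f hgf hfd p hp hfp
  -- p < k
  have hpk : p < k := by
    obtain ⟨t, ht, hne⟩ := win 0
    rw [Nat.zero_add, Nat.mod_eq_of_lt (by omega)] at hne
    by_contra hcon
    push_neg at hcon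
    have ht' : t < p := by omega
    exact hne (by rw [← hcoe t (by omega)]; exact hbefore t ht')
  -- the support as a Finset of ℕ
  set T : Finset ℕ := (Finset.range n).filter (fun j => f.coeff j ≠ 0) with hTdef
  have hTmem : ∀ j, j ∈ T ↔ j < n ∧ f.coeff j ≠ 0 := by
    intro j; simp [hTdef, Finset.mem_filter, Finset.mem_range]
  have hTcard : T.card = w := by
    rw [← hwt]
    have e2 : T = (Finset.univ.filter (fun i : Fin n => c i ≠ 0)).image Fin.val := by
      ext j
      simp only [hTmem, Finset.mem_image, Finset.mem_filter, Finset.mem_univ, true_and]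
      constructor
      · rintro ⟨hj, hne⟩
        exact ⟨⟨j, hj⟩, by rw [hcoe j hj]; exact hne, rfl⟩
      · rintro ⟨i, hne, rfl⟩
        exact ⟨i.isLt, by rw [← hcoe i i.isLt]; simpa using hne⟩
    rw [e2, Finset.card_image_of_injective _ Fin.val_injective]
    rw [wt, ← Set.ncard_coe_finset]
    congr 1
    ext i
    simp
  -- class function
  set cls : ℕ → ℕ := fun j => ((j + (n - p)) % n) / k with hclsdef
  have hclslt : ∀ j, cls j < w := by
    intro j
    have : (j + (n - p)) % n < n := Nat.mod_lt _ hn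
    exact (Nat.div_lt_iff_lt_mul hk).mpr (by omega)
  have hclsval : ∀ m r, m < w → r < k → cls (p + m * k + r) = m := by
    intro m r hm hr
    have hMb := hmk m hm
    have e1 : p + m * k + r + (n - p) = (m * k + r) + n := by omega
    simp only [hclsdef]
    rw [e1, Nat.add_mod_right, Nat.mod_eq_of_lt (by omega), Nat.add_comm,
      Nat.add_mul_div_right r m hk, Nat.div_eq_of_lt hr, Nat.zero_add]
  -- fibers of cls on T each have exactly one element
  have hsum : T.card = ∑ m ∈ Finset.range w, (T.filter (fun j => cls j = m)).card :=
    Finset.card_eq_sum_card_fiberwise (fun j _ => Finset.mem_range.mpr (hclslt j))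
  have hfib_pos : ∀ m ∈ Finset.range w, 1 ≤ (T.filter (fun j => cls j = m)).card := by
    intro m hm
    rw [Finset.mem_range] at hm
    obtain ⟨t, ht, hne⟩ := win (p + m * k)
    have hMb := hmk m hm
    have hlt : p + m * k + t < n := by
      by_contra hge
      push_neg at hge
      have hlt2 : p + m * k + t - n < p := by omega
      have hmod : (p + m * k + t) % n = p + m * k + t - n := by
        rw [Nat.mod_eq_sub_mod hge, Nat.mod_eq_of_lt (by omega)]
      rw [hmod] at hne
      exact hne (by rw [← hcoe _ (by omega)]; exact hbefore _ hlt2)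
    rw [Nat.mod_eq_of_lt hlt] at hne
    refine Finset.card_pos.mpr ⟨p + m * k + t, ?_⟩
    rw [Finset.mem_filter]
    exact ⟨(hTmem _).mpr ⟨hlt, hne⟩, hclsval m t hm ht⟩
  have hfib_one : ∀ m ∈ Finset.range w, (T.filter (fun j => cls j = m)).card = 1 := by
    by_contra hcon
    push_neg at hcon
    obtain ⟨m0, hm0, hne1⟩ := hcon
    have : (Finset.range w).card < ∑ m ∈ Finset.range w, (T.filter (fun j => cls j = m)).card := by
      rw [Finset.card_eq_sum_ones]
      apply Finset.sum_lt_sum hfib_pos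
      exact ⟨m0, hm0, lt_of_le_of_ne (hfib_pos m0 hm0) (Ne.symm hne1)⟩
    rw [← hsum, hTcard, Finset.card_range] at this
    omega
  have huniq : ∀ j1 j2, j1 ∈ T → j2 ∈ T → cls j1 = cls j2 → j1 = j2 := by
    intro j1 j2 h1 h2 he
    obtain ⟨x, hx⟩ := Finset.card_eq_one.mp
      (hfib_one (cls j1) (Finset.mem_range.mpr (hclslt j1)))
    have e1 : j1 ∈ T.filter (fun j => cls j = cls j1) := Finset.mem_filter.mpr ⟨h1, rfl⟩
    have e2 : j2 ∈ T.filter (fun j => cls j = cls j1) := Finset.mem_filter.mpr ⟨h2, he.symm⟩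
    rw [hx, Finset.mem_singleton] at e1 e2
    rw [e1, e2]
  -- induction: positions p + m*k are in the support
  have hstep : ∀ m, m < w → f.coeff (p + m * k) ≠ 0 := by
    intro m
    induction m with
    | zero => intro _; simpa using hfp
    | succ m ih =>
      intro hm1
      have hm : m < w := by omega
      have ihne := ih hm
      have hMb := hmk m hm
      have hMb2 : m * k + 2 * k ≤ n := by
        have h2 : (m + 2) * k ≤ w * k := Nat.mul_le_mul_right k (by omega)
        have h3 : (m + 2) * k = m * k + 2 * k := by ring
        omega
      obtain ⟨t, ht, hne⟩ := win (p + m * k + 1)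
      have hlt : p + m * k + 1 + t < n := by omega
      rw [Nat.mod_eq_of_lt hlt] at hne
      rcases Nat.lt_or_ge (1 + t) k with htk | htk
      · -- contradiction with uniqueness
        exfalso
        have e1 : p + m * k + 1 + t = p + m * k + (1 + t) := by omega
        rw [e1] at hne hlt
        have hc1 : cls (p + m * k + (1 + t)) = m := hclsval m (1 + t) hm htk
        have hc2 : cls (p + m * k + 0) = m := hclsval m 0 hm hk
        have hj1 : p + m * k + (1 + t) ∈ T := (hTmem _).mpr ⟨hlt, hne⟩
        have hj2 : p + m * k + 0 ∈ T := (hTmem _).mpr ⟨by omega, by simpa using ihne⟩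
        have := huniq _ _ hj1 hj2 (by rw [hc1, hc2])
        omega
      · have e1 : p + m * k + 1 + t = p + (m + 1) * k := by
          have : (m + 1) * k = m * k + k := by ring
          omega
        rw [e1] at hne
        exact hne
  -- conclusion
  intro i
  constructor
  · intro hne
    have hfi : f.coeff (i : ℕ) ≠ 0 := by rw [← hcoe i i.isLt]; simpa using hne
    have hiT : (i : ℕ) ∈ T := (hTmem _).mpr ⟨i.isLt, hfi⟩
    set m := cls (i : ℕ) with hmdef
    have hmw : m < w := hclslt _
    have hMb := hmk m hmw
    have hj2 : p + m * k ∈ T := (hTmem _).mpr ⟨by omega, hstep m hmw⟩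
    have hc2 : cls (p + m * k) = m := by simpa using hclsval m 0 hmw hk
    have := huniq _ _ hiT hj2 (by rw [hc2])
    exact ⟨m, hmw, this⟩
  · rintro ⟨z, hz, hiz⟩
    have hMb := hmk z hz
    have : c i = f.coeff (p + z * k) := by
      rw [← hiz, ← hcoe i i.isLt]
    rw [this]
    exact hstep z hz
end
end

section
/- Let C be a constacyclic code in F^n with modulus x^n - a, and let ℓ be the multiplicative order of a in F. Then for every natural number z, the Schur power code C^{zℓ+1} is again closed under the constacyclic shift (c_0,...,c_{n-1}) ↦ (a·c_{n-1}, c_0, ..., c_{n-2}), hence is a constacyclic code with the same modulus. -/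
open Polynomial

noncomputable section

def shiftL {F : Type*} [Field F] {n : ℕ} (b : F) : (Fin n → F) →ₗ[F] (Fin n → F) where
  toFun := shiftBy b
  map_add' := by
    intro c d; funext i; simp only [shiftBy, Pi.add_apply]; split <;> ring
  map_smul' := by
    intro r c; funext i
    simp only [shiftBy, Pi.smul_apply, smul_eq_mul, RingHom.id_apply]; split <;> ring

lemma shiftBy_mul {F : Type*} [Field F] {n : ℕ} (b b' : F) (c d : Fin n → F) :
    shiftBy (b * b') (c * d) = shiftBy b c * shiftBy b' d := by
  funext i
  simp only [shiftBy, Pi.mul_apply]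
  split <;> ring

lemma key_shift {F : Type*} [Field F] {n : ℕ} (a : F) (W : Submodule F (Fin n → F))
    (hW : ∀ c ∈ W, shiftBy a c ∈ W) :
    ∀ m : ℕ, ∀ c ∈ schurPow W (m + 1), shiftBy (a ^ (m + 1)) c ∈ schurPow W (m + 1) := by
  intro m
  induction m with
  | zero => simpa [schurPow, pow_one] using hW
  | succ k ih =>
    have hmap : Submodule.map (shiftL (a ^ (k + 2)))
        (schurPow W (k + 2)) ≤ schurPow W (k + 2) := by
      show Submodule.map (shiftL (a ^ (k + 2)))
        (Submodule.span F {x | ∃ c ∈ W, ∃ d ∈ schurPow W (k+1), x = c * d}) ≤ _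
      rw [Submodule.map_span]
      apply Submodule.span_le.2
      rintro x ⟨y, ⟨c, hc, d, hd, rfl⟩, rfl⟩
      apply Submodule.subset_span
      refine ⟨shiftBy a c, hW c hc, shiftBy (a ^ (k + 1)) d, ih d hd, ?_⟩
      show shiftBy (a ^ (k + 2)) (c * d) = _
      rw [← shiftBy_mul, ← pow_succ']
    intro c hc
    exact hmap ⟨c, hc, rfl⟩

/-- If C is a constacyclic code (a subspace closed under the a-shift) and ℓ is
the multiplicative order of a, then for every z the Schur power C^{zℓ+1} is again closed
under the a-shift, hence constacyclic with the same modulus. -/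
theorem stmt4 {F : Type*} [Field F] [Fintype F] {n : ℕ} (hn : 0 < n)
    (a : F) (ha : a ≠ 0) (W : Submodule F (Fin n → F))
    (hW : ∀ c ∈ W, shiftBy a c ∈ W) :
    ∀ z : ℕ, ∀ c ∈ schurPow W (z * orderOf a + 1),
      shiftBy a c ∈ schurPow W (z * orderOf a + 1) := by
  intro z c hc
  have h := key_shift a W hW (z * orderOf a) c hc
  rwa [show a ^ (z * orderOf a + 1) = a by
    rw [pow_succ, pow_mul', pow_orderOf_eq_one, one_pow, one_mul]] at h
end
end

section
/- Let k divide n, a ∈ F nonzero, and suppose g(x) = u·∑_{i=0}^{n/k - 1} d^i x^{k·i} where u is a unit and d ∈ F satisfies d^{-(n/k)} = a. Then x^k·g(x) ≡ d^{-1}·g(x) (mod x^n - a). -/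
open Polynomial

noncomputable section

/-- If g(x) = u·∑_{i<n/k} d^i x^{ki} with u a unit and d^{n/k} = a⁻¹,
then x^k·g(x) ≡ d⁻¹·g(x) (mod x^n - a). -/
theorem stmt6 {F : Type*} [Field F] [Fintype F] {n k : ℕ} (hn : 0 < n) (hkdvd : k ∣ n)
    (hk : 0 < k) (a : F) (ha : a ≠ 0) (d : F) (hd : d ≠ 0) (hda : d ^ (n / k) = a⁻¹)
    (u : F) (hu : u ≠ 0)
    (g : F[X]) (hg : g = C u * ∑ i ∈ Finset.range (n / k), C (d ^ i) * X ^ (k * i)) :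
    (X ^ n - C a) ∣ (X ^ k * g - C d⁻¹ * g) := by
  obtain ⟨m, rfl⟩ := hkdvd
  have hm : k * m / k = m := Nat.mul_div_cancel_left m hk
  rw [hm] at hda
  set f : ℕ → F[X] := fun j => C d⁻¹ * (C (d ^ j) * X ^ (k * j)) with hf
  have key : X ^ k * g - C d⁻¹ * g = C u * (f m - f 0) := by
    rw [← Finset.sum_range_sub f m, hg, hm, Finset.mul_sum, Finset.mul_sum,
      Finset.mul_sum, Finset.mul_sum, ← Finset.sum_sub_distrib]
    refine Finset.sum_congr rfl fun i _ => ?_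
    have hdd : C d * C (d⁻¹) = 1 := by rw [← C_mul, mul_inv_cancel₀ hd, C_1]
    simp only [hf, mul_add, mul_one, pow_add, pow_succ, map_mul, map_pow, C_1]
    linear_combination (-(X ^ k * X ^ (k * i) * C u * C d ^ i)) * hdd
  refine ⟨C (u * (d⁻¹ * a⁻¹)), ?_⟩
  rw [key]
  have haa : C (a⁻¹) * C a = 1 := by rw [← C_mul, inv_mul_cancel₀ ha, C_1]
  simp only [hf, hda, mul_zero, pow_zero, map_mul, map_inv₀, C_1]
  linear_combination C u * C (d⁻¹) * haa
end
end

section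
/- Let C ⊆ F^n be a constacyclic code with modulus x^n - a generated by g(x) = u·∑_{i=0}^{n/k - 1} d^i x^{k·i}, where u is a unit, k | n, and d^{-(n/k)} = a. Then the basis {coeff(x^i·g(x) mod x^n - a) : 0 ≤ i < k} of C consists of vectors with pairwise disjoint supports, and every nonzero basis vector has Hamming weight exactly n/k. -/
open Polynomial

noncomputable section

/-- If g = u·∑_{i<n/k} d^i x^{ki} with u a unit, k ∣ n, d^{n/k} = a⁻¹, then
the basis {coeff(x^i g mod x^n - a) : 0 ≤ i < k} consists of vectors with pairwise disjoint
supports, and every nonzero basis vector has Hamming weight exactly n/k. -/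
theorem stmt9 {F : Type*} [Field F] [Fintype F] {n k : ℕ} (hn : 0 < n) (hk : 0 < k)
    (hkdvd : k ∣ n) (a : F) (ha : a ≠ 0) (d : F) (hd : d ≠ 0) (hda : d ^ (n / k) = a⁻¹)
    (u : F) (hu : u ≠ 0)
    (g : F[X]) (hg : g = C u * ∑ i ∈ Finset.range (n / k), C (d ^ i) * X ^ (k * i))
    (b : ℕ → Fin n → F)
    (hb : ∀ i : ℕ, ∀ m : Fin n, b i m = ((X ^ i * g) %ₘ (X ^ n - C a)).coeff m) :
    (∀ i j : ℕ, i < k → j < k → i ≠ j → ∀ m : Fin n, b i m = 0 ∨ b j m = 0) ∧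
      (∀ i : ℕ, i < k → b i ≠ 0 → wt (b i) = n / k) := by
  have hnk : 0 < n / k := Nat.div_pos (Nat.le_of_dvd hn hkdvd) hk
  have hkn : k ≤ n := Nat.le_of_dvd hn hkdvd
  have hkk : k * (n / k) = n := Nat.mul_div_cancel' hkdvd
  -- coefficient formula for g
  have gcoeff : ∀ t : ℕ, g.coeff t = if k ∣ t ∧ t / k < n / k then u * d ^ (t / k) else 0 := by
    intro t
    rw [hg, coeff_C_mul, finset_sum_coeff]
    simp only [coeff_C_mul, coeff_X_pow]
    by_cases h : k ∣ t ∧ t / k < n / k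
    · obtain ⟨⟨s, hs⟩, hlt⟩ := h
      subst hs
      rw [Nat.mul_div_cancel_left s hk] at hlt ⊢
      rw [if_pos ⟨⟨s, rfl⟩, hlt⟩]
      rw [Finset.sum_eq_single s]
      · simp
      · intro j _ hj
        rw [if_neg, mul_zero]
        intro hEq
        exact hj (Nat.eq_of_mul_eq_mul_left hk hEq.symm)
      · intro hs
        exact absurd (Finset.mem_range.mpr hlt) hs
    · rw [if_neg h]
      rw [Finset.sum_eq_zero, mul_zero]
      intro j hj
      rw [if_neg, mul_zero]
      intro hEq
      exact h ⟨⟨j, hEq⟩, by rw [hEq, Nat.mul_div_cancel_left j hk]; exact Finset.mem_range.mp hj⟩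
  -- coefficient formula for X^i * g
  have hcoeff : ∀ (i m : ℕ), (X ^ i * g).coeff m =
      if i ≤ m then g.coeff (m - i) else 0 := by
    intro i m
    rw [mul_comm, coeff_mul_X_pow']
  -- X^i * g has degree < n for i < k
  have hmod : ∀ i : ℕ, i < k → (X ^ i * g) %ₘ (X ^ n - C a) = X ^ i * g := by
    intro i hi
    rw [modByMonic_eq_self_iff (monic_X_pow_sub_C a hn.ne'), degree_X_pow_sub_C hn,
      degree_lt_iff_coeff_zero]
    intro m hm
    rw [hcoeff, if_pos (by omega), gcoeff, if_neg]
    rintro ⟨⟨s, hs⟩, hlt⟩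
    rw [hs, Nat.mul_div_cancel_left s hk] at hlt
    -- n ≤ m = i + k*s, i < k, so n/k ≤ s
    have h1 : n ≤ i + k * s := by omega
    have h2 : k * (n / k) < k * (s + 1) := by
      rw [hkk, Nat.mul_succ]; omega
    exact absurd (Nat.lt_of_mul_lt_mul_left h2) (by omega)
  -- value formula for b
  have bval : ∀ i : ℕ, i < k → ∀ m : Fin n, b i m =
      if i ≤ (m : ℕ) ∧ k ∣ ((m : ℕ) - i) ∧ ((m : ℕ) - i) / k < n / k
      then u * d ^ (((m : ℕ) - i) / k) else 0 := by
    intro i hi m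
    rw [hb, hmod i hi, hcoeff, gcoeff]
    by_cases h1 : i ≤ (m : ℕ)
    · rw [if_pos h1]
      by_cases h2 : k ∣ ((m : ℕ) - i) ∧ ((m : ℕ) - i) / k < n / k
      · rw [if_pos h2, if_pos ⟨h1, h2⟩]
      · rw [if_neg h2, if_neg (by tauto)]
    · rw [if_neg h1, if_neg (by tauto)]
  constructor
  · intro i j hi hj hij m
    by_contra hcon
    push_neg at hcon
    obtain ⟨h1, h2⟩ := hcon
    rw [bval i hi] at h1
    rw [bval j hj] at h2
    by_cases c1 : i ≤ (m : ℕ) ∧ k ∣ ((m : ℕ) - i) ∧ ((m : ℕ) - i) / k < n / k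
    · by_cases c2 : j ≤ (m : ℕ) ∧ k ∣ ((m : ℕ) - j) ∧ ((m : ℕ) - j) / k < n / k
      · obtain ⟨hi1, ⟨s, hs⟩, _⟩ := c1
        obtain ⟨hj1, ⟨t, ht⟩, _⟩ := c2
        have hmi : (m : ℕ) = i + k * s := by omega
        have hmj : (m : ℕ) = j + k * t := by omega
        have e1 : (m : ℕ) % k = i := by
          rw [hmi, Nat.add_mul_mod_self_left, Nat.mod_eq_of_lt hi]
        have e2 : (m : ℕ) % k = j := by
          rw [hmj, Nat.add_mul_mod_self_left, Nat.mod_eq_of_lt hj]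
        omega
      · exact h2 (if_neg c2)
    · exact h1 (if_neg c1)
  · intro i hi _
    have hlt : ∀ j : Fin (n / k), i + k * (j : ℕ) < n := by
      intro j
      have hj := j.isLt
      have : k * ((j : ℕ) + 1) ≤ k * (n / k) := Nat.mul_le_mul_left k (by omega)
      rw [hkk] at this
      rw [Nat.mul_succ] at this
      omega
    set f : Fin (n / k) → Fin n := fun j => ⟨i + k * (j : ℕ), hlt j⟩ with hf
    have hfi : Function.Injective f := by
      intro j1 j2 h
      have : i + k * (j1 : ℕ) = i + k * (j2 : ℕ) := congrArg Fin.val h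
      have : k * (j1 : ℕ) = k * (j2 : ℕ) := by omega
      exact Fin.ext (Nat.eq_of_mul_eq_mul_left hk this)
    have hset : {m : Fin n | b i m ≠ 0} = f '' Set.univ := by
      ext m
      simp only [Set.mem_setOf_eq, Set.image_univ, Set.mem_range]
      rw [bval i hi]
      constructor
      · intro hne
        by_cases c : i ≤ (m : ℕ) ∧ k ∣ ((m : ℕ) - i) ∧ ((m : ℕ) - i) / k < n / k
        · obtain ⟨h1, ⟨s, hs⟩, h3⟩ := c
          rw [hs, Nat.mul_div_cancel_left s hk] at h3
          refine ⟨⟨s, h3⟩, ?_⟩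
          apply Fin.ext
          simp only [hf]
          omega
        · exact absurd (if_neg c) hne
      · rintro ⟨j, rfl⟩
        have hm : ((f j : Fin n) : ℕ) = i + k * (j : ℕ) := rfl
        rw [hm]
        have hc : i ≤ i + k * (j : ℕ) ∧ k ∣ (i + k * (j : ℕ) - i) ∧
            (i + k * (j : ℕ) - i) / k < n / k := by
          refine ⟨by omega, ⟨(j : ℕ), by omega⟩, ?_⟩
          rw [show i + k * (j : ℕ) - i = k * (j : ℕ) by omega,
            Nat.mul_div_cancel_left _ hk]
          exact j.isLt
        rw [if_pos hc]
        exact mul_ne_zero hu (pow_ne_zero _ hd)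
    rw [wt, hset, Set.ncard_image_of_injective _ hfi, Set.ncard_univ]
    simp [Nat.card_eq_fintype_card]
end
end

section
/- For a cyclic code of length n (modulus x^n - 1) over a finite field F, the map k ↦ the code generated by m_k(x) = ∑_{i=0}^{n/k - 1} x^{k·i} is a bijection between the positive divisors of n and the set of nonzero cyclic codes C ⊆ F^n satisfying C^{⟨2⟩} = C; moreover the code corresponding to divisor k has dimension k. -/
open Polynomial

noncomputable section

/-- The submodule of `k`-periodic vectors. -/
def per (F : Type*) [Field F] (n k : ℕ) : Submodule F (Fin n → F) where
  carrier := {v | ∀ i : Fin n, v i = v ⟨(i : ℕ) % k, lt_of_le_of_lt (Nat.mod_le _ _) i.isLt⟩}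
  add_mem' := fun ha hb i => by simp [ha i, hb i]
  zero_mem' := fun i => rfl
  smul_mem' := fun c v hv i => by simp [Pi.smul_apply, hv i]

lemma mem_per {F : Type*} [Field F] {n k : ℕ} {v : Fin n → F} :
    v ∈ per F n k ↔ ∀ i : Fin n, v i = v ⟨(i : ℕ) % k, lt_of_le_of_lt (Nat.mod_le _ _) i.isLt⟩ :=
  Iff.rfl

lemma per_congr {F : Type*} [Field F] {n k : ℕ} {v : Fin n → F} (hv : v ∈ per F n k)
    {i j : Fin n} (h : (i : ℕ) % k = (j : ℕ) % k) : v i = v j := by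
  rw [mem_per] at hv
  rw [hv i, hv j]
  congr 1
  exact Fin.ext h

lemma finrank_per {F : Type*} [Field F] {n k : ℕ} (hn : 0 < n) (hk : 0 < k) (hdvd : k ∣ n) :
    Module.finrank F (per F n k) = k := by
  have hkn : k ≤ n := Nat.le_of_dvd hn hdvd
  let φ : (Fin k → F) →ₗ[F] (Fin n → F) :=
    { toFun := fun c => fun i => c ⟨(i : ℕ) % k, Nat.mod_lt _ hk⟩
      map_add' := fun a b => rfl
      map_smul' := fun a b => rfl }
  have hinj : Function.Injective φ := by
    intro a b hab
    funext r
    have := congrFun hab ⟨(r : ℕ), lt_of_lt_of_le r.isLt hkn⟩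
    simpa [φ, Nat.mod_eq_of_lt r.isLt] using this
  have hrange : LinearMap.range φ = per F n k := by
    apply le_antisymm
    · rintro _ ⟨c, rfl⟩
      intro i
      simp only [φ, LinearMap.coe_mk, AddHom.coe_mk]
      congr 1
      exact Fin.ext (Nat.mod_mod_of_dvd _ (dvd_refl k)).symm
    · intro v hv
      refine ⟨fun r => v ⟨(r : ℕ), lt_of_lt_of_le r.isLt hkn⟩, ?_⟩
      funext i
      simp only [φ, LinearMap.coe_mk, AddHom.coe_mk]
      exact (per_congr hv (by simp [Nat.mod_mod_of_dvd _ (dvd_refl k)])).symm.trans rfl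
  have := LinearMap.finrank_range_of_inj hinj
  rw [hrange] at this
  rw [this]
  simp [Module.finrank_pi]

lemma shift_per {F : Type*} [Field F] {n k : ℕ} (hn : 0 < n) (hk : 0 < k) (hdvd : k ∣ n)
    {v : Fin n → F} (hv : v ∈ per F n k) : shiftBy (1 : F) v ∈ per F n k := by
  have hkn : k ≤ n := Nat.le_of_dvd hn hdvd
  intro i
  by_cases h0 : (i : ℕ) = 0
  · congr 1; exact Fin.ext (by simp [h0])
  · rw [shiftBy]
    simp only [h0, dif_neg, not_false_iff]
    by_cases hr : (i : ℕ) % k = 0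
    · -- i ≡ 0 mod k, i ≠ 0 so i ≥ k
      have hik : k ≤ (i : ℕ) := by
        rcases Nat.dvd_of_mod_eq_zero hr with ⟨m, hm⟩
        rcases Nat.eq_zero_or_pos m with h | h
        · subst h; simp at hm; omega
        · calc k = k * 1 := by ring
            _ ≤ k * m := by exact Nat.mul_le_mul_left k h
            _ = (i:ℕ) := hm.symm
      have : shiftBy (1:F) v ⟨(i:ℕ) % k, lt_of_le_of_lt (Nat.mod_le _ _) i.isLt⟩ = 1 * v ⟨n-1, by omega⟩ := by
        rw [shiftBy]; simp [hr]
      rw [this, one_mul]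
      apply per_congr hv
      show ((i:ℕ) - 1) % k = (n - 1) % k
      obtain ⟨m, hm⟩ := Nat.dvd_of_mod_eq_zero hr
      obtain ⟨l, hl⟩ := hdvd
      have key : ∀ a j : ℕ, j = k * a → 1 ≤ j → (j - 1) % k = k - 1 := by
        intro a j hj hj1
        cases a with
        | zero => omega
        | succ a' =>
          have e : k * (a' + 1) = k * a' + k := Nat.mul_succ k a'
          have : j - 1 = k * a' + (k - 1) := by omega
          rw [this, Nat.mul_add_mod, Nat.mod_eq_of_lt (by omega)]
      rw [key m (i:ℕ) hm (by omega), key l n hl (by omega)]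
    · -- i % k ≠ 0
      have : shiftBy (1:F) v ⟨(i:ℕ) % k, lt_of_le_of_lt (Nat.mod_le _ _) i.isLt⟩ = v ⟨(i:ℕ) % k - 1, by
          have : (i:ℕ) % k < n := lt_of_le_of_lt (Nat.mod_le _ _) i.isLt; omega⟩ := by
        rw [shiftBy]; simp [hr]
      rw [this]
      apply per_congr hv
      show ((i:ℕ) - 1) % k = ((i:ℕ) % k - 1) % k
      obtain ⟨q, r, hr2, hqr⟩ : ∃ q r, r = (i:ℕ) % k ∧ (i:ℕ) = k * q + r :=
        ⟨(i:ℕ)/k, (i:ℕ)%k, rfl, (Nat.div_add_mod _ _).symm ▸ by omega⟩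
      have hrk : (i:ℕ) % k < k := Nat.mod_lt _ hk
      have hr1 : 1 ≤ (i:ℕ) % k := by omega
      have : ((i:ℕ) - 1) = k * q + ((i:ℕ)%k - 1) := by omega
      rw [this, Nat.mul_add_mod]

lemma one_mem_per {F : Type*} [Field F] {n k : ℕ} : (fun _ : Fin n => (1:F)) ∈ per F n k :=
  fun _ => rfl

lemma per_ne_bot {F : Type*} [Field F] {n k : ℕ} (hn : 0 < n) : per F n k ≠ ⊥ := by
  rw [Submodule.ne_bot_iff]
  refine ⟨fun _ => 1, one_mem_per, ?_⟩
  intro h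
  exact one_ne_zero (congrFun h ⟨0, hn⟩)

lemma schur_per {F : Type*} [Field F] {n k : ℕ} (hn : 0 < n) :
    schurPow (per F n k) 2 = per F n k := by
  show Submodule.span F {x | ∃ c ∈ per F n k, ∃ d ∈ schurPow (per F n k) 1, x = c * d} = per F n k
  have h1 : schurPow (per F n k) 1 = per F n k := rfl
  rw [h1]
  apply le_antisymm
  · rw [Submodule.span_le]
    rintro x ⟨c, hc, d, hd, rfl⟩
    intro i
    show c i * d i = c _ * d _
    rw [mem_per] at hc hd
    exact congrArg₂ (· * ·) (hc i) (hd i)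
  · intro v hv
    apply Submodule.subset_span
    exact ⟨v, hv, fun _ => 1, one_mem_per, by funext i; simp⟩

section FactA
variable {F : Type*} [Field F] {n k : ℕ} (hn : 0 < n) (hk : 0 < k) (hdvd : k ∣ n)
include hn hk hdvd

lemma coeff_mk (t : ℕ) :
    (∑ i ∈ Finset.range (n / k), (X : F[X]) ^ (k * i)).coeff t
      = if k ∣ t ∧ t < n then 1 else 0 := by
  rw [Polynomial.finset_sum_coeff]
  simp only [Polynomial.coeff_X_pow]
  by_cases h : k ∣ t ∧ t < n
  · obtain ⟨m, hm⟩ := h.1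
    have htn := h.2
    rw [Finset.sum_eq_single m]
    · rw [if_pos hm, if_pos h]
    · intro b _ hb
      rw [if_neg]
      intro hbt
      exact hb (Nat.eq_of_mul_eq_mul_left hk (by omega))
    · intro hm2
      exfalso
      rw [Finset.mem_range, not_lt] at hm2
      have e1 : n = k * (n / k) := (Nat.mul_div_cancel' hdvd).symm
      have e2 : k * (n/k) ≤ k * m := Nat.mul_le_mul_left k hm2
      omega
  · rw [Finset.sum_eq_zero, if_neg h]
    intro b hb
    rw [Finset.mem_range] at hb
    rw [if_neg]
    intro hbt
    apply h
    constructor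
    · exact ⟨b, hbt⟩
    · have e1 : n = k * (n / k) := (Nat.mul_div_cancel' hdvd).symm
      have e2 : k * (b+1) ≤ k * (n/k) := Nat.mul_le_mul_left k hb
      have e3 : k * (b+1) = k * b + k := Nat.mul_succ k b
      omega

lemma coeff_mul_mk (r : F[X]) (hr : ∀ j, k ≤ j → r.coeff j = 0) {i : ℕ} (hi : i < n) :
    ((∑ j ∈ Finset.range (n / k), (X : F[X]) ^ (k * j)) * r).coeff i = r.coeff (i % k) := by
  rw [Polynomial.coeff_mul]
  rw [Finset.sum_eq_single (i - i % k, i % k)]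
  · rw [coeff_mk hn hk hdvd]
    rw [if_pos]
    · rw [one_mul]
    have hdm := Nat.div_add_mod i k
    constructor
    · exact ⟨i / k, by omega⟩
    · omega
  · rintro ⟨a, b⟩ hab hne
    rw [Finset.HasAntidiagonal.mem_antidiagonal] at hab
    by_cases hbk : k ≤ b
    · rw [hr b hbk, mul_zero]
    · push_neg at hbk
      rw [coeff_mk hn hk hdvd, if_neg, zero_mul]
      rintro ⟨⟨m, hm⟩, -⟩
      apply hne
      have hbmod : b = i % k := by
        have : i = k * m + b := by omega
        rw [this, Nat.mul_add_mod, Nat.mod_eq_of_lt hbk]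
      simp only [Prod.mk.injEq]
      omega
  · intro hmem
    exfalso
    rw [Finset.HasAntidiagonal.mem_antidiagonal] at hmem
    have : i % k ≤ i := Nat.mod_le _ _
    omega


lemma degree_mk_le :
    (∑ i ∈ Finset.range (n / k), (X : F[X]) ^ (k * i)).degree ≤ ((n - k : ℕ) : WithBot ℕ) := by
  refine (Polynomial.degree_sum_le _ _).trans ?_
  apply Finset.sup_le
  intro i hi
  rw [Finset.mem_range] at hi
  rw [Polynomial.degree_X_pow]
  exact_mod_cast (by
    have e1 : n = k * (n / k) := (Nat.mul_div_cancel' hdvd).symm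
    have e2 : k * (i+1) ≤ k * (n/k) := Nat.mul_le_mul_left k hi
    have e3 : k * (i+1) = k * i + k := Nat.mul_succ k i
    omega : k * i ≤ n - k)

lemma degree_mk_mul_lt (r : F[X]) (hr : r.degree < (k : WithBot ℕ)) :
    ((∑ i ∈ Finset.range (n / k), (X : F[X]) ^ (k * i)) * r).degree < ((n : ℕ) : WithBot ℕ) := by
  rcases eq_or_ne r 0 with rfl | hr0
  · rw [mul_zero, Polynomial.degree_zero]
    exact (WithBot.bot_lt_iff_ne_bot.mpr (by exact_mod_cast WithBot.natCast_ne_bot n))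
  · refine (Polynomial.degree_mul_le _ _).trans_lt ?_
    have h1 := degree_mk_le hn hk hdvd (F := F)
    have h2 : r.degree ≤ ((r.natDegree : ℕ) : WithBot ℕ) := Polynomial.degree_le_natDegree
    have h3 : r.natDegree < k := by
      rwa [Polynomial.degree_eq_natDegree hr0, Nat.cast_lt] at hr
    calc (∑ i ∈ Finset.range (n / k), (X : F[X]) ^ (k * i)).degree + r.degree
        ≤ ((n - k : ℕ) : WithBot ℕ) + ((r.natDegree : ℕ) : WithBot ℕ) := add_le_add h1 h2
      _ = (((n - k) + r.natDegree : ℕ) : WithBot ℕ) := by rw [Nat.cast_add]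
      _ < ((n : ℕ) : WithBot ℕ) := by
          rw [Nat.cast_lt]
          have := Nat.le_of_dvd hn hdvd
          omega

lemma span_codeOf_eq_per :
    Submodule.span F (codeOf n (1 : F) (∑ i ∈ Finset.range (n / k), X ^ (k * i)))
      = per F n k := by
  set mk : F[X] := ∑ i ∈ Finset.range (n / k), X ^ (k * i) with hmk
  have hQmonic : (X ^ n - C (1:F)).Monic := Polynomial.monic_X_pow_sub_C 1 hn.ne'
  have hPmonic : (X ^ k - C (1:F)).Monic := Polynomial.monic_X_pow_sub_C 1 hk.ne'
  have hPQ : (X ^ k - C (1:F)) * mk = X ^ n - C (1:F) := by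
    rw [hmk]
    have := geom_sum_mul (X ^ k : F[X]) (n / k)
    calc (X ^ k - C (1:F)) * ∑ i ∈ Finset.range (n / k), (X:F[X]) ^ (k * i)
        = (∑ i ∈ Finset.range (n / k), ((X:F[X]) ^ k) ^ i) * (X ^ k - 1) := by
          rw [Polynomial.C_1]
          rw [mul_comm]
          congr 1
          exact Finset.sum_congr rfl fun i _ => (pow_mul X k i)
      _ = ((X:F[X]) ^ k) ^ (n / k) - 1 := this
      _ = X ^ n - C (1:F) := by rw [← pow_mul, Nat.mul_div_cancel' hdvd, Polynomial.C_1]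
  apply le_antisymm
  · rw [Submodule.span_le]
    rintro v ⟨h, hv⟩
    rw [SetLike.mem_coe, mem_per]
    intro i
    set r : F[X] := h %ₘ (X ^ k - C (1:F)) with hrdef
    have hrdeg : r.degree < (k : WithBot ℕ) := by
      rw [hrdef]
      have := Polynomial.degree_modByMonic_lt h hPmonic
      rwa [Polynomial.degree_X_pow_sub_C hk 1] at this
    have hrcoeff : ∀ j, k ≤ j → r.coeff j = 0 := fun j hj =>
      Polynomial.coeff_eq_zero_of_degree_lt (hrdeg.trans_le (by exact_mod_cast hj))
    have hfact : mk * h = (X ^ n - C (1:F)) * (h /ₘ (X ^ k - C (1:F))) + mk * r := by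
      conv_lhs => rw [← Polynomial.modByMonic_add_div h (X ^ k - C (1:F))]
      rw [← hPQ]; ring
    have hmod : (mk * h) %ₘ (X ^ n - C (1:F)) = mk * r := by
      rw [hfact, Polynomial.add_modByMonic]
      rw [(Polynomial.modByMonic_eq_zero_iff_dvd hQmonic).mpr (Dvd.intro _ rfl), zero_add]
      exact (Polynomial.modByMonic_eq_self_iff hQmonic).mpr (by
        rw [Polynomial.degree_X_pow_sub_C hn 1]
        exact degree_mk_mul_lt hn hk hdvd r hrdeg)
    have hv' : ∀ j : Fin n, v j = r.coeff ((j : ℕ) % k) := by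
      intro j
      rw [hv j, hmod, coeff_mul_mk hn hk hdvd r hrcoeff j.isLt]
    rw [hv' i, hv' ⟨(i : ℕ) % k, lt_of_le_of_lt (Nat.mod_le _ _) i.isLt⟩]
    simp [Nat.mod_mod_of_dvd _ (dvd_refl k)]
  · intro v hv
    rw [mem_per] at hv
    have hkn : k ≤ n := Nat.le_of_dvd hn hdvd
    have he : ∀ r : Fin k, (fun i : Fin n => if (i : ℕ) % k = (r : ℕ) then (1:F) else 0)
        ∈ codeOf n (1 : F) mk := by
      intro r
      refine ⟨X ^ (r : ℕ), ?_⟩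
      intro i
      have hmod : (mk * X ^ (r:ℕ)) %ₘ (X ^ n - C (1:F)) = mk * X ^ (r:ℕ) :=
        (Polynomial.modByMonic_eq_self_iff hQmonic).mpr (by
          rw [Polynomial.degree_X_pow_sub_C hn 1]
          refine degree_mk_mul_lt hn hk hdvd _ ?_
          rw [Polynomial.degree_X_pow, Nat.cast_lt]
          exact r.isLt)
      rw [hmod, coeff_mul_mk hn hk hdvd _ (fun j hj => by
        rw [Polynomial.coeff_X_pow, if_neg]; omega) i.isLt]
      rw [Polynomial.coeff_X_pow]
    have hvsum : v = ∑ r : Fin k,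
        v ⟨(r : ℕ), lt_of_lt_of_le r.isLt hkn⟩ •
          (fun i : Fin n => if (i : ℕ) % k = (r : ℕ) then (1:F) else 0) := by
      funext i
      rw [Finset.sum_apply]
      rw [Finset.sum_eq_single ⟨(i : ℕ) % k, Nat.mod_lt _ hk⟩]
      · simp only [Pi.smul_apply, smul_eq_mul, Fin.val_mk]
        simpa using hv i
      · rintro b - hb
        simp only [Pi.smul_apply, smul_eq_mul]
        rw [if_neg, mul_zero]
        intro hc
        exact hb (Fin.ext (by simpa using hc.symm))
      · intro hmem
        exact absurd (Finset.mem_univ _) hmem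
    rw [hvsum]
    exact Submodule.sum_mem _ fun r _ => Submodule.smul_mem _ _ (Submodule.subset_span (he r))

end FactA

section Fourier
variable {K : Type*} [Field K] {n : ℕ}

/-- Discrete Fourier transform w.r.t. ζ. -/
def hatv (ζ : K) (v : Fin n → K) : Fin n → K :=
  fun j => ∑ i : Fin n, v i * ζ ^ ((i : ℕ) * (j : ℕ))

def hatL (ζ : K) : (Fin n → K) →ₗ[K] (Fin n → K) where
  toFun := hatv ζ
  map_add' u v := by
    funext j
    simp [hatv, add_mul, Finset.sum_add_distrib]
  map_smul' a v := by
    funext j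
    simp [hatv, Finset.mul_sum, mul_assoc]

def bvec (ζ : K) (a : ℕ) : Fin n → K := fun i => (ζ⁻¹) ^ ((i : ℕ) * a)

lemma pow_mod_n {x : K} (hx : x ^ n = 1) (a : ℕ) : x ^ a = x ^ (a % n) := by
  conv_lhs => rw [← Nat.div_add_mod a n]
  rw [pow_add, pow_mul, hx, one_pow, one_mul]

variable (hn : 0 < n) {ζ : K} (hζ : IsPrimitiveRoot ζ n)
include hn hζ

lemma zeta_ne_zero : ζ ≠ 0 := hζ.ne_zero hn.ne'

lemma zeta_inv_pow_n : (ζ⁻¹) ^ n = 1 := by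
  rw [inv_pow, hζ.pow_eq_one, inv_one]

lemma keysum (a b : ℕ) :
    ∑ i ∈ Finset.range n, ζ ^ (i * a) * (ζ⁻¹) ^ (i * b)
      = if a % n = b % n then (n : K) else 0 := by
  have hterm : ∀ i : ℕ, ζ ^ (i * a) * (ζ⁻¹) ^ (i * b) = (ζ ^ a * (ζ⁻¹) ^ b) ^ i := by
    intro i
    rw [mul_pow, ← pow_mul, ← pow_mul, mul_comm a i, mul_comm b i]
  rw [Finset.sum_congr rfl fun i _ => hterm i]
  by_cases h : a % n = b % n
  · rw [if_pos h]
    have hx : ζ ^ a * (ζ⁻¹) ^ b = 1 := by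
      rw [pow_mod_n hζ.pow_eq_one a, pow_mod_n (zeta_inv_pow_n hn hζ) b, h,
        inv_pow, mul_inv_cancel₀ (pow_ne_zero _ (zeta_ne_zero hn hζ))]
    calc ∑ x ∈ Finset.range n, (ζ ^ a * ζ⁻¹ ^ b) ^ x
        = ∑ _x ∈ Finset.range n, (1:K) := Finset.sum_congr rfl fun x _ => by rw [hx, one_pow]
      _ = (n : K) := by simp
  · rw [if_neg h]
    have hx : ζ ^ a * (ζ⁻¹) ^ b ≠ 1 := by
      intro hc
      apply h
      have : ζ ^ a = ζ ^ b := by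
        rw [inv_pow] at hc
        exact (mul_inv_eq_one₀ (pow_ne_zero _ (zeta_ne_zero hn hζ))).mp hc
      rw [pow_mod_n hζ.pow_eq_one a, pow_mod_n hζ.pow_eq_one b] at this
      exact hζ.pow_inj (Nat.mod_lt _ hn) (Nat.mod_lt _ hn) this
    rw [geom_sum_eq hx]
    have hxn : (ζ ^ a * (ζ⁻¹) ^ b) ^ n = 1 := by
      rw [mul_pow, ← pow_mul, mul_comm a n, pow_mul, hζ.pow_eq_one, one_pow, one_mul,
        ← pow_mul, mul_comm b n, pow_mul, zeta_inv_pow_n hn hζ, one_pow]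
    rw [hxn, sub_self, zero_div]

lemma keysum_fin (a b : ℕ) :
    ∑ i : Fin n, ζ ^ ((i : ℕ) * a) * (ζ⁻¹) ^ ((i : ℕ) * b)
      = if a % n = b % n then (n : K) else 0 := by
  rw [Fin.sum_univ_eq_sum_range (fun i => ζ ^ (i * a) * (ζ⁻¹) ^ (i * b)) n]
  exact keysum hn hζ a b

lemma hat_inversion (v : Fin n → K) (l : Fin n) :
    ∑ j : Fin n, hatv ζ v j * (ζ⁻¹) ^ ((l : ℕ) * (j : ℕ)) = (n : K) * v l := by
  simp only [hatv, Finset.sum_mul]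
  rw [Finset.sum_comm]
  have : ∀ i : Fin n, ∑ j : Fin n, v i * ζ ^ ((i:ℕ) * (j:ℕ)) * (ζ⁻¹) ^ ((l:ℕ) * (j:ℕ))
      = v i * if (i : ℕ) % n = (l : ℕ) % n then (n : K) else 0 := by
    intro i
    rw [← keysum_fin hn hζ (i : ℕ) (l : ℕ), Finset.mul_sum]
    apply Finset.sum_congr rfl
    intro j _
    rw [mul_comm ((j:ℕ)) ((i:ℕ)), mul_comm ((j:ℕ)) ((l:ℕ)), mul_assoc]
  rw [Finset.sum_congr rfl fun i _ => this i]
  rw [Finset.sum_eq_single l]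
  · rw [if_pos rfl, mul_comm]
  · intro b _ hb
    rw [if_neg, mul_zero]
    rw [Nat.mod_eq_of_lt b.isLt, Nat.mod_eq_of_lt l.isLt]
    exact fun hc => hb (Fin.ext hc)
  · intro h
    exact absurd (Finset.mem_univ _) h

lemma hat_smul_inversion (v : Fin n → K) :
    (n : K) • v = ∑ j : Fin n, hatv ζ v j • bvec ζ (j : ℕ) := by
  funext l
  rw [Finset.sum_apply]
  simp only [Pi.smul_apply, smul_eq_mul, bvec]
  exact (hat_inversion hn hζ v l).symm

lemma hat_injective (hn0 : (n : K) ≠ 0) : Function.Injective (hatv (n := n) ζ) := by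
  intro u v huv
  have h1 := hat_smul_inversion hn hζ u
  have h2 := hat_smul_inversion hn hζ v
  rw [huv] at h1
  have h3 : (n:K) • u = (n:K) • v := h1.trans h2.symm
  funext l
  have := congrFun h3 l
  simp only [Pi.smul_apply, smul_eq_mul] at this
  exact mul_left_cancel₀ hn0 this

omit hn hζ in
lemma shiftBy_one_eq (hn : 0 < n) (c : Fin n → K) :
    shiftBy (1 : K) c = fun i : Fin n => c ⟨((i : ℕ) + (n - 1)) % n, Nat.mod_lt _ hn⟩ := by
  funext i
  rw [shiftBy]
  by_cases h : (i : ℕ) = 0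
  · rw [dif_pos h, one_mul]
    congr 1
    exact Fin.ext (by simp [h, Nat.mod_eq_of_lt (show n - 1 < n by omega)])
  · rw [dif_neg h]
    congr 1
    apply Fin.ext
    show (i:ℕ) - 1 = ((i:ℕ) + (n - 1)) % n
    have hi := i.isLt
    rw [show (i:ℕ) + (n-1) = ((i:ℕ) - 1) + 1 * n by omega, Nat.add_mul_mod_self_right,
      Nat.mod_eq_of_lt (by omega)]

lemma zeta_pow_mod_mul (a b : ℕ) :
    ζ ^ ((a % n) * b) = ζ ^ (a * b) := by
  rw [pow_mod_n hζ.pow_eq_one ((a % n) * b), pow_mod_n hζ.pow_eq_one (a * b),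
    Nat.mod_mul_mod]

lemma hat_shift (v : Fin n → K) (j : Fin n) :
    hatv ζ (shiftBy (1 : K) v) j = ζ ^ (j : ℕ) * hatv ζ v j := by
  rw [hatv, shiftBy_one_eq hn]
  set f : Fin n → K := fun i => v ⟨((i : ℕ) + (n - 1)) % n, Nat.mod_lt _ hn⟩ * ζ ^ ((i:ℕ) * (j:ℕ))
    with hf
  let e : Equiv.Perm (Fin n) :=
    ⟨fun i => ⟨((i:ℕ) + 1) % n, Nat.mod_lt _ hn⟩,
     fun i => ⟨((i:ℕ) + (n - 1)) % n, Nat.mod_lt _ hn⟩,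
     fun i => by
       apply Fin.ext
       show (((i:ℕ) + 1) % n + (n - 1)) % n = (i:ℕ)
       have hi := i.isLt
       rw [Nat.mod_add_mod, show (i:ℕ) + 1 + (n-1) = (i:ℕ) + 1 * n by omega,
         Nat.add_mul_mod_self_right, Nat.mod_eq_of_lt hi],
     fun i => by
       apply Fin.ext
       show (((i:ℕ) + (n - 1)) % n + 1) % n = (i:ℕ)
       have hi := i.isLt
       rw [Nat.mod_add_mod, show (i:ℕ) + (n-1) + 1 = (i:ℕ) + 1 * n by omega,
         Nat.add_mul_mod_self_right, Nat.mod_eq_of_lt hi]⟩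
  have hsum : ∑ i : Fin n, f i = ∑ i : Fin n, f (e i) := (Equiv.sum_comp e f).symm
  rw [hsum]
  have hterm : ∀ i : Fin n, f (e i) = v i * ζ ^ ((i:ℕ) * (j:ℕ)) * ζ ^ (j : ℕ) := by
    intro i
    have hi := i.isLt
    have h1 : ((((i:ℕ) + 1) % n) + (n - 1)) % n = (i:ℕ) := by
      rw [Nat.mod_add_mod, show (i:ℕ) + 1 + (n-1) = (i:ℕ) + 1 * n by omega,
        Nat.add_mul_mod_self_right, Nat.mod_eq_of_lt hi]
    have h2 : ζ ^ ((((i:ℕ) + 1) % n) * (j:ℕ)) = ζ ^ ((i:ℕ) * (j:ℕ)) * ζ ^ (j:ℕ) := by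
      rw [zeta_pow_mod_mul hn hζ ((i:ℕ)+1) (j:ℕ), add_mul, one_mul, pow_add]
    have hidx : (⟨(((i:ℕ)+1) % n + (n-1)) % n, Nat.mod_lt _ hn⟩ : Fin n) = i := Fin.ext h1
    calc f (e i) = v ⟨(((i:ℕ)+1)%n + (n-1))%n, Nat.mod_lt _ hn⟩
          * ζ^((((i:ℕ)+1)%n) * (j:ℕ)) := rfl
      _ = v i * (ζ^((i:ℕ)*(j:ℕ)) * ζ^(j:ℕ)) := by rw [hidx, h2]
      _ = v i * ζ^((i:ℕ)*(j:ℕ)) * ζ^(j:ℕ) := (mul_assoc _ _ _).symm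
  rw [Finset.sum_congr rfl fun i _ => hterm i]
  rw [← Finset.sum_mul, mul_comm]
  rfl

lemma hat_bvec (a : ℕ) (j : Fin n) :
    hatv ζ (bvec ζ a) j = if (j : ℕ) % n = a % n then (n : K) else 0 := by
  rw [← keysum_fin hn hζ (j : ℕ) a]
  apply Finset.sum_congr rfl
  intro i _
  rw [bvec, mul_comm]

end Fourier

section Bvec
variable {K : Type*} [Field K] {n : ℕ}

lemma bvec_mul (ζ : K) (a b : ℕ) :
    bvec (n := n) ζ a * bvec ζ b = bvec ζ (a + b) := by
  funext i
  show (ζ⁻¹) ^ ((i:ℕ) * a) * (ζ⁻¹) ^ ((i:ℕ) * b) = (ζ⁻¹) ^ ((i:ℕ) * (a + b))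
  rw [← pow_add, mul_add]

end Bvec

lemma semigroup_divisor {n : ℕ} (hn : 0 < n) (S : Set ℕ)
    (hmod : ∀ a : ℕ, a ∈ S ↔ a % n ∈ S)
    (hadd : ∀ a ∈ S, ∀ b ∈ S, a + b ∈ S)
    (hne : S.Nonempty) :
    ∃ d : ℕ, 0 < d ∧ d ∣ n ∧ S = {j : ℕ | d ∣ j} := by
  obtain ⟨a₀, ha₀⟩ := hne
  have haddmul : ∀ a ∈ S, ∀ b ∈ S, ∀ m : ℕ, a + m * b ∈ S := by
    intro a ha b hb m
    induction m with
    | zero => simpa using ha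
    | succ m ih =>
      have : a + (m + 1) * b = (a + m * b) + b := by ring
      rw [this]
      exact hadd _ ih _ hb
  have hzero : 0 ∈ S := by
    have hb : a₀ % n ∈ S := (hmod _).mp ha₀
    have h1 : a₀ % n + (n - 1) * (a₀ % n) ∈ S := haddmul _ hb _ hb _
    have h2 : a₀ % n + (n - 1) * (a₀ % n) = n * (a₀ % n) := by
      rw [Nat.sub_mul, one_mul]
      have := Nat.le_mul_of_pos_left (a₀ % n) hn
      omega
    rw [h2] at h1
    have h3 := (hmod _).mp h1
    rwa [Nat.mul_mod_right] at h3
  have hnS : n ∈ S := (hmod n).mpr (by rwa [Nat.mod_self])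
  set T := {m : ℕ | 0 < m ∧ m ∈ S} with hT
  have hTne : T.Nonempty := ⟨n, hn, hnS⟩
  set d := sInf T with hd
  have hdT : d ∈ T := Nat.sInf_mem hTne
  have hd0 : 0 < d := hdT.1
  have hdS : d ∈ S := hdT.2
  have hdn : d ≤ n := Nat.sInf_le ⟨hn, hnS⟩
  have hsub : ∀ a ∈ S, d ≤ a → a - d ∈ S := by
    intro a ha hda
    have h1 : a + (n - 1) * d ∈ S := haddmul _ ha _ hdS _
    have h2 : (a + (n - 1) * d) % n = (a - d) % n := by
      have e1 : (n - 1) * d = n * d - d := by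
        rw [Nat.sub_mul, one_mul]
      have e2 : d ≤ n * d := Nat.le_mul_of_pos_left d hn
      have e3 : a + (n - 1) * d = (a - d) + d * n := by
        rw [e1]
        have : n * d = d * n := Nat.mul_comm n d
        omega
      rw [e3, Nat.add_mul_mod_self_right]
    have := (hmod _).mp h1
    rw [h2] at this
    exact (hmod _).mpr this
  have hmodd : ∀ a ∈ S, a % d ∈ S := by
    intro a
    induction a using Nat.strong_induction_on with
    | _ a ih =>
      intro ha
      by_cases hlt : a < d
      · rwa [Nat.mod_eq_of_lt hlt]
      · push_neg at hlt
        have h1 : a - d ∈ S := hsub a ha hlt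
        have h2 : (a - d) % d = a % d := by
          conv_rhs => rw [show a = (a - d) + d by omega]
          rw [Nat.add_mod_right]
        have h3 : a - d < a := by omega
        rw [← h2]
        exact ih _ h3 h1
  have hSd : ∀ a ∈ S, d ∣ a := by
    intro a ha
    by_contra hnd
    have h1 : a % d ∈ S := hmodd a ha
    have h2 : 0 < a % d := Nat.pos_of_ne_zero fun h => hnd (Nat.dvd_of_mod_eq_zero h)
    have h3 : d ≤ a % d := Nat.sInf_le ⟨h2, h1⟩
    have h4 : a % d < d := Nat.mod_lt _ hd0
    omega
  refine ⟨d, hd0, hSd n hnS, ?_⟩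
  ext j
  simp only [Set.mem_setOf_eq]
  constructor
  · exact hSd j
  · rintro ⟨m, rfl⟩
    rcases Nat.eq_zero_or_pos m with rfl | hm
    · simpa using hzero
    · have : 0 + m * d ∈ S := haddmul _ hzero _ hdS m
      simpa [Nat.mul_comm] using this

section Surj
variable {F K : Type*} [Field F] [Field K] [Algebra F K] {n : ℕ}

lemma surj_main (hn : 0 < n) {ζ : K} (hζ : IsPrimitiveRoot ζ n) (hn0 : (n : K) ≠ 0)
    (W : Submodule F (Fin n → F))
    (hshift : ∀ c ∈ W, shiftBy (1 : F) c ∈ W) (hne : W ≠ ⊥)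
    (hschur : schurPow W 2 = W) :
    ∃ k : ℕ, 0 < k ∧ k ∣ n ∧ W = per F n k := by
  classical
  -- the F-linear embedding into K-vectors
  let ι : (Fin n → F) →ₗ[F] (Fin n → K) :=
    { toFun := fun v i => algebraMap F K (v i)
      map_add' := fun u v => by funext i; simp
      map_smul' := fun a v => by
        funext i
        simp [Algebra.smul_def] }
  set V : Submodule K (Fin n → K) := Submodule.span K (ι '' (W : Set (Fin n → F))) with hV
  have hιmem : ∀ w ∈ W, ι w ∈ V := fun w hw =>
    Submodule.subset_span ⟨w, hw, rfl⟩
  have hιmul : ∀ u v : Fin n → F, ι (u * v) = ι u * ι v := by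
    intro u v; funext i; simp [ι]
  -- products stay in V
  have hmulV : ∀ c ∈ V, ∀ d ∈ V, c * d ∈ V := by
    have hgen : ∀ w₁ ∈ W, ∀ w₂ ∈ W, (ι w₁) * (ι w₂) ∈ V := by
      intro w₁ h₁ w₂ h₂
      rw [← hιmul]
      apply hιmem
      have : w₁ * w₂ ∈ schurPow W 2 := by
        apply Submodule.subset_span
        exact ⟨w₁, h₁, w₂, h₂, rfl⟩
      rwa [hschur] at this
    intro c hc
    induction hc using Submodule.span_induction with
    | mem x hx =>
      obtain ⟨w₁, hw₁, rfl⟩ := hx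
      intro d hd
      induction hd using Submodule.span_induction with
      | mem y hy => obtain ⟨w₂, hw₂, rfl⟩ := hy; exact hgen _ hw₁ _ hw₂
      | zero => rw [mul_zero]; exact V.zero_mem
      | add y z _ _ hy hz => rw [mul_add]; exact V.add_mem hy hz
      | smul a y _ hy => rw [mul_smul_comm]; exact V.smul_mem a hy
    | zero => intro d _; rw [zero_mul]; exact V.zero_mem
    | add x y _ _ hx hy => intro d hd; rw [add_mul]; exact V.add_mem (hx d hd) (hy d hd)
    | smul a x _ hx => intro d hd; rw [smul_mul_assoc]; exact V.smul_mem a (hx d hd)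
  -- shifts stay in V
  have hshiftι : ∀ w : Fin n → F, shiftBy (1 : K) (ι w) = ι (shiftBy (1 : F) w) := by
    intro w
    funext i
    by_cases h : (i : ℕ) = 0 <;> simp [shiftBy, h, ι]
  have hshiftV : ∀ c ∈ V, shiftBy (1 : K) c ∈ V := by
    intro c hc
    induction hc using Submodule.span_induction with
    | mem x hx =>
      obtain ⟨w, hw, rfl⟩ := hx
      rw [hshiftι]
      exact hιmem _ (hshift w hw)
    | zero =>
      have : shiftBy (1 : K) (0 : Fin n → K) = 0 := by
        rw [shiftBy_one_eq hn]; funext i; simp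
      rw [this]; exact V.zero_mem
    | add x y _ _ hx hy =>
      have : shiftBy (1 : K) (x + y) = shiftBy (1:K) x + shiftBy (1:K) y := by
        rw [shiftBy_one_eq hn, shiftBy_one_eq hn, shiftBy_one_eq hn]; funext i; simp
      rw [this]; exact V.add_mem hx hy
    | smul a x _ hx =>
      have : shiftBy (1 : K) (a • x) = a • shiftBy (1:K) x := by
        rw [shiftBy_one_eq hn, shiftBy_one_eq hn]; funext i; simp
      rw [this]; exact V.smul_mem a hx
  -- iterated shifts
  have hiter_mem : ∀ (w : Fin n → K), w ∈ V → ∀ m : ℕ, (shiftBy (1:K))^[m] w ∈ V := by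
    intro w hw m
    induction m with
    | zero => simpa using hw
    | succ m ih =>
      rw [Function.iterate_succ_apply']
      exact hshiftV _ ih
  have hiter_hat : ∀ (w : Fin n → K) (m : ℕ) (j : Fin n),
      hatv ζ ((shiftBy (1:K))^[m] w) j = ζ ^ ((j:ℕ) * m) * hatv ζ w j := by
    intro w m
    induction m with
    | zero => intro j; simp
    | succ m ih =>
      intro j
      rw [Function.iterate_succ_apply', hat_shift hn hζ, ih j, ← mul_assoc, ← pow_add]
      congr 2
      ring
  -- the support set
  set S : Set ℕ := {a | ∃ v, v ∈ V ∧ hatv ζ v ⟨a % n, Nat.mod_lt _ hn⟩ ≠ 0} with hS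
  have hidx : ∀ a : ℕ, (⟨a % n % n, Nat.mod_lt _ hn⟩ : Fin n) = ⟨a % n, Nat.mod_lt _ hn⟩ :=
    fun a => Fin.ext (Nat.mod_mod_of_dvd _ dvd_rfl)
  have hSmod : ∀ a : ℕ, a ∈ S ↔ a % n ∈ S := by
    intro a
    constructor
    · rintro ⟨v, hv, h⟩
      exact ⟨v, hv, by rwa [hidx a]⟩
    · rintro ⟨v, hv, h⟩
      rw [hidx a] at h
      exact ⟨v, hv, h⟩
  have hexists_S : ∀ (j : Fin n) (v : Fin n → K), v ∈ V → hatv ζ v j ≠ 0 → (j : ℕ) ∈ S := by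
    intro j v hv h
    refine ⟨v, hv, ?_⟩
    have : (⟨(j:ℕ) % n, Nat.mod_lt _ hn⟩ : Fin n) = j := Fin.ext (Nat.mod_eq_of_lt j.isLt)
    rwa [this]
  -- hat of a sum via linearity
  have hat_sum : ∀ {α : Type} (s : Finset α) (f : α → Fin n → K) (j : Fin n),
      hatv ζ (∑ m ∈ s, f m) j = ∑ m ∈ s, hatv ζ (f m) j := by
    intro α s f j
    simp only [hatv, Finset.sum_apply, Finset.sum_mul]
    rw [Finset.sum_comm]
  have hat_smul' : ∀ (a : K) (v : Fin n → K) (j : Fin n),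
      hatv ζ (a • v) j = a * hatv ζ v j := by
    intro a v j
    simp only [hatv, Pi.smul_apply, smul_eq_mul, Finset.mul_sum, mul_assoc]
  -- basis vectors of the Fourier side belong to V
  have b_mem : ∀ a ∈ S, bvec ζ a ∈ V := by
    rintro a ⟨w, hw, hc⟩
    set j₀ : Fin n := ⟨a % n, Nat.mod_lt _ hn⟩ with hj₀
    set c : K := hatv ζ w j₀ with hcdef
    set u : Fin n → K := ∑ m ∈ Finset.range n, ((ζ⁻¹) ^ (m * a)) • ((shiftBy (1:K))^[m] w)
      with hu
    have huV : u ∈ V := Submodule.sum_mem _ fun m _ =>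
      Submodule.smul_mem _ _ (hiter_mem w hw m)
    have hhatu : ∀ j : Fin n, hatv ζ u j
        = (if (j:ℕ) % n = a % n then (n : K) else 0) * hatv ζ w j := by
      intro j
      rw [hu, hat_sum]
      have : ∀ m ∈ Finset.range n, hatv ζ (((ζ⁻¹) ^ (m * a)) • ((shiftBy (1:K))^[m] w)) j
          = (ζ ^ (m * (j:ℕ)) * (ζ⁻¹) ^ (m * a)) * hatv ζ w j := by
        intro m _
        rw [hat_smul', hiter_hat w m j, ← mul_assoc, mul_comm ((ζ⁻¹) ^ (m * a)) _,
          mul_comm ((j:ℕ)) m]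
      rw [Finset.sum_congr rfl this, ← Finset.sum_mul, keysum hn hζ]
    have hhatb : ∀ j : Fin n, hatv ζ (c • bvec ζ a) j
        = c * (if (j:ℕ) % n = a % n then (n : K) else 0) := by
      intro j
      rw [hat_smul', hat_bvec hn hζ]
    have hueq : hatv ζ u = hatv ζ (c • bvec ζ a) := by
      funext j
      rw [hhatu j, hhatb j]
      by_cases h : (j:ℕ) % n = a % n
      · rw [if_pos h]
        have : j = j₀ := Fin.ext (by rw [hj₀]; exact (Nat.mod_eq_of_lt j.isLt).symm.trans h)
        rw [this, ← hcdef, mul_comm]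
      · rw [if_neg h, zero_mul, mul_zero]
    have := hat_injective hn hζ hn0 hueq
    have hbv : bvec ζ a = c⁻¹ • u := by
      rw [this, inv_smul_smul₀ hc]
    rw [hbv]
    exact Submodule.smul_mem _ _ huV
  -- S is closed under addition
  have hSadd : ∀ a ∈ S, ∀ b ∈ S, a + b ∈ S := by
    intro a ha b hb
    have h1 : bvec ζ (a + b) ∈ V := by
      rw [← bvec_mul]
      exact hmulV _ (b_mem a ha) _ (b_mem b hb)
    refine ⟨bvec ζ (a + b), h1, ?_⟩
    rw [hat_bvec hn hζ]
    rw [if_pos (Nat.mod_mod_of_dvd _ dvd_rfl)]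
    exact hn0
  -- S is nonempty
  have hSne : S.Nonempty := by
    obtain ⟨w, hw, hw0⟩ := Submodule.ne_bot_iff W |>.mp hne
    have hιw0 : ι w ≠ 0 := by
      intro h
      apply hw0
      funext i
      have := congrFun h i
      exact (algebraMap F K).injective (by simpa [ι] using this)
    have hhat0 : hatv ζ (ι w) ≠ 0 := by
      intro h
      apply hιw0
      apply hat_injective hn hζ hn0
      rw [h]
      funext j
      simp [hatv]
    obtain ⟨j, hj⟩ := Function.ne_iff.mp hhat0
    exact ⟨(j : ℕ), hexists_S j (ι w) (hιmem w hw) hj⟩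
  -- extract the divisor
  obtain ⟨d, hd0, hdn, hSeq⟩ := semigroup_divisor hn S hSmod hSadd hSne
  set k : ℕ := n / d with hkdef
  have hkd : k * d = n := Nat.div_mul_cancel hdn
  have hk0 : 0 < k := Nat.div_pos (Nat.le_of_dvd hn hdn) hd0
  have hkn : k ∣ n := Nat.div_dvd_of_dvd hdn
  refine ⟨k, hk0, hkn, ?_⟩
  -- b-vectors with divisible index are k-periodic
  have bvec_per : ∀ a : ℕ, d ∣ a → bvec ζ a ∈ per K n k := by
    rintro a ⟨t, rfl⟩
    intro i
    show (ζ⁻¹) ^ ((i:ℕ) * (d * t)) = (ζ⁻¹) ^ (((i:ℕ) % k) * (d * t))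
    rw [pow_mod_n (zeta_inv_pow_n hn hζ) ((i:ℕ) * (d * t)),
      pow_mod_n (zeta_inv_pow_n hn hζ) (((i:ℕ) % k) * (d * t))]
    congr 1
    have hsplit : (i:ℕ) * (d * t) = ((i:ℕ) % k) * (d * t) + n * (((i:ℕ) / k) * t) := by
      conv_lhs => rw [show (i:ℕ) = (i:ℕ) % k + k * ((i:ℕ) / k) from by
        rw [Nat.mod_add_div]]
      rw [add_mul]
      congr 1
      calc k * ((i:ℕ)/k) * (d * t) = (k * d) * (((i:ℕ)/k) * t) := by ring
        _ = n * (((i:ℕ)/k) * t) := by rw [hkd]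
    rw [hsplit, Nat.add_mul_mod_self_left]
  -- every element of V is k-periodic
  have hVper : ∀ v ∈ V, v ∈ per K n k := by
    intro v hv
    have hrepr := hat_smul_inversion hn hζ v
    have hveq : v = (n:K)⁻¹ • ∑ j : Fin n, hatv ζ v j • bvec ζ (j : ℕ) := by
      rw [← hrepr, inv_smul_smul₀ hn0]
    rw [hveq]
    apply Submodule.smul_mem
    apply Submodule.sum_mem
    intro j _
    by_cases hz : hatv ζ v j = 0
    · rw [hz, zero_smul]; exact Submodule.zero_mem _
    · apply Submodule.smul_mem
      apply bvec_per
      have hjS : (j : ℕ) ∈ S := hexists_S j v hv hz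
      rw [hSeq] at hjS
      exact hjS
  -- W is contained in the periodic submodule
  have hWper : W ≤ per F n k := by
    intro w hw
    have h1 : ι w ∈ per K n k := hVper _ (hιmem w hw)
    intro i
    have h2 := h1 i
    exact (algebraMap F K).injective (by simpa [ι] using h2)
  -- lower bound on the dimension of V
  have hdimV : k ≤ Module.finrank K V := by
    set B : {j : Fin n // d ∣ (j : ℕ)} → (Fin n → K) :=
      fun j => bvec ζ ((j : Fin n) : ℕ) with hB
    have hBV : ∀ j, B j ∈ V := by
      intro j
      apply b_mem
      rw [hSeq]
      exact j.2
    have hBli : LinearIndependent K B := by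
      rw [Fintype.linearIndependent_iff]
      intro g hg j₀
      have h1 : hatv ζ (∑ j, g j • B j) ((j₀ : Fin n)) = 0 := by rw [hg]; simp [hatv]
      have h2 : hatv ζ (∑ j, g j • B j) ((j₀ : Fin n))
          = ∑ j, g j * (if ((j₀ : Fin n) : ℕ) % n = ((j : Fin n) : ℕ) % n
            then (n:K) else 0) := by
        rw [hat_sum]
        apply Finset.sum_congr rfl
        intro j _
        rw [hat_smul', hB, hat_bvec hn hζ]
      have h3 : ∑ j, g j * (if ((j₀ : Fin n) : ℕ) % n = ((j : Fin n) : ℕ) % n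
          then (n:K) else 0) = g j₀ * (n : K) := by
        rw [Finset.sum_eq_single j₀]
        · rw [if_pos rfl]
        · intro b _ hb
          rw [if_neg, mul_zero]
          intro hc
          apply hb
          apply Subtype.ext
          apply Fin.ext
          rw [Nat.mod_eq_of_lt (j₀ : Fin n).isLt, Nat.mod_eq_of_lt (b : Fin n).isLt] at hc
          exact hc.symm
        · intro h; exact absurd (Finset.mem_univ _) h
      have h4 : g j₀ * (n : K) = 0 := by rw [← h3, ← h2, h1]
      rcases mul_eq_zero.mp h4 with h | h
      · exact h
      · exact absurd h hn0
    have hsub : Submodule.span K (Set.range B) ≤ V :=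
      Submodule.span_le.mpr (by rintro _ ⟨j, rfl⟩; exact hBV j)
    have hcard : Fintype.card {j : Fin n // d ∣ (j : ℕ)} = k := by
      let e : {j : Fin n // d ∣ (j : ℕ)} ≃ Fin k :=
        { toFun := fun j => ⟨((j : Fin n) : ℕ) / d, by
            obtain ⟨t, ht⟩ := j.2
            have hjn := (j : Fin n).isLt
            rw [ht, Nat.mul_div_cancel_left _ hd0]
            by_contra hkt
            push_neg at hkt
            have h5 : d * k ≤ d * t := Nat.mul_le_mul_left d hkt
            have h6 : d * k = n := by rw [mul_comm]; exact hkd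
            omega⟩
          invFun := fun m => ⟨⟨d * (m : ℕ), by
            have h5 : d * (m : ℕ) < d * k := (Nat.mul_lt_mul_left hd0).mpr m.isLt
            have h6 : d * k = n := by rw [mul_comm]; exact hkd
            omega⟩, ⟨(m : ℕ), rfl⟩⟩
          left_inv := fun j => Subtype.ext (Fin.ext (Nat.mul_div_cancel' j.2))
          right_inv := fun m => Fin.ext (Nat.mul_div_cancel_left _ hd0) }
      rw [← Fintype.card_fin k]
      exact Fintype.card_congr e
    calc k = Fintype.card {j : Fin n // d ∣ (j : ℕ)} := hcard.symm
      _ = Module.finrank K (Submodule.span K (Set.range B)) :=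
          (finrank_span_eq_card hBli).symm
      _ ≤ Module.finrank K V := Submodule.finrank_mono hsub
  -- upper bound : dim V ≤ dim W
  have hsmulι : ∀ (a : F) (v : Fin n → F), ι (a • v) = algebraMap F K a • ι v := by
    intro a v
    funext i
    simp [ι, Algebra.smul_def]
  have hdimW : Module.finrank K V ≤ Module.finrank F W := by
    set m := Module.finrank F W with hm
    let bW : Module.Basis (Fin m) F W := Module.finBasis F W
    let f : Fin m → (Fin n → K) := fun i => ι ((bW i : W) : Fin n → F)
    have hWsp : ∀ x : W, ι (x : Fin n → F) ∈ Submodule.span K (Set.range f) := by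
      intro x
      have h1 : x ∈ Submodule.span F (Set.range bW) := Module.Basis.mem_span bW x
      induction h1 using Submodule.span_induction with
      | mem y hy =>
        obtain ⟨i, rfl⟩ := hy
        exact Submodule.subset_span ⟨i, rfl⟩
      | zero => rw [ZeroMemClass.coe_zero, map_zero]; exact Submodule.zero_mem _
      | add y z _ _ hy hz =>
        rw [AddMemClass.coe_add, map_add]
        exact Submodule.add_mem _ hy hz
      | smul a y _ hy =>
        rw [SetLike.val_smul, hsmulι]
        exact Submodule.smul_mem _ _ hy
    have hVle : V ≤ Submodule.span K (Set.range f) :=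
      Submodule.span_le.mpr (by rintro _ ⟨w, hw, rfl⟩; exact hWsp ⟨w, hw⟩)
    calc Module.finrank K V ≤ Module.finrank K (Submodule.span K (Set.range f)) :=
        Submodule.finrank_mono hVle
      _ ≤ Fintype.card (Fin m) := finrank_range_le_card f
      _ = m := by simp
  have hfr : Module.finrank F (per F n k) ≤ Module.finrank F W := by
    rw [finrank_per hn hk0 hkn]
    exact le_trans hdimV hdimW
  exact Submodule.eq_of_le_of_finrank_le hWper hfr

end Surj

/-- For cyclic codes of length n (char F ∤ n), the map
k ↦ (code generated by m_k(x) = ∑_{i<n/k} x^{ki}) is a bijection between positive divisors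
of n and nonzero cyclic codes C with C^{⟨2⟩} = C; the code for divisor k has dimension k. -/
theorem stmt15 {F : Type*} [Field F] [Fintype F] {n : ℕ} (hn : 0 < n)
    (hchar : (n : F) ≠ 0) :
    Set.BijOn
      (fun k : ℕ => Submodule.span F (codeOf n (1 : F)
        (∑ i ∈ Finset.range (n / k), X ^ (k * i))))
      {k : ℕ | 0 < k ∧ k ∣ n}
      {W : Submodule F (Fin n → F) |
        (∀ c ∈ W, shiftBy (1 : F) c ∈ W) ∧ W ≠ ⊥ ∧ schurPow W 2 = W} ∧
    ∀ k : ℕ, 0 < k → k ∣ n →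
      Module.finrank F (Submodule.span F (codeOf n (1 : F)
        (∑ i ∈ Finset.range (n / k), X ^ (k * i)))) = k := by
  classical
  set K := AlgebraicClosure F with hK
  have hn0 : (n : K) ≠ 0 := by
    intro h
    apply hchar
    apply (algebraMap F K).injective
    simp only [map_natCast, map_zero]
    exact h
  haveI : NeZero ((n : ℕ) : K) := ⟨hn0⟩
  obtain ⟨ζ, hζ'⟩ := IsAlgClosed.exists_root (cyclotomic n K)
    (degree_cyclotomic_pos n K hn).ne.symm
  have hζ : IsPrimitiveRoot ζ n := Polynomial.isRoot_cyclotomic_iff.mp hζ'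
  constructor
  · refine ⟨?_, ?_, ?_⟩
    · intro k hk
      obtain ⟨hk0, hdvd⟩ := hk
      simp only [Set.mem_setOf_eq]
      rw [span_codeOf_eq_per hn hk0 hdvd]
      exact ⟨fun c hc => shift_per hn hk0 hdvd hc, per_ne_bot hn, schur_per hn⟩
    · intro k₁ hk₁ k₂ hk₂ heq
      simp only at heq
      have e1 : Module.finrank F (Submodule.span F (codeOf n (1 : F)
          (∑ i ∈ Finset.range (n / k₁), (X : F[X]) ^ (k₁ * i)))) = k₁ := by
        rw [span_codeOf_eq_per hn hk₁.1 hk₁.2]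
        exact finrank_per hn hk₁.1 hk₁.2
      have e2 : Module.finrank F (Submodule.span F (codeOf n (1 : F)
          (∑ i ∈ Finset.range (n / k₂), (X : F[X]) ^ (k₂ * i)))) = k₂ := by
        rw [span_codeOf_eq_per hn hk₂.1 hk₂.2]
        exact finrank_per hn hk₂.1 hk₂.2
      rw [← e1, ← e2, heq]
    · intro W hW
      obtain ⟨hshift, hne, hschur⟩ := hW
      obtain ⟨k, hk0, hdvd, hWeq⟩ := surj_main hn hζ hn0 W hshift hne hschur
      refine ⟨k, ⟨hk0, hdvd⟩, ?_⟩
      simp only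
      rw [span_codeOf_eq_per hn hk0 hdvd]
      exact hWeq.symm
  · intro k hk0 hdvd
    rw [span_codeOf_eq_per hn hk0 hdvd]
    exact finrank_per hn hk0 hdvd
end
end

section
/- Let C ⊆ F^n be a linear code and r(C) its Castelnuovo–Mumford regularity (the least r ≥ 0 with dim C^{⟨r⟩} = dim C^{⟨r+i⟩} for all i ≥ 0). Then for all z with 1 ≤ z ≤ r(C) - 1, dim(C^{⟨z+1⟩}) > dim(C^{⟨z⟩}); i.e., the dimension sequence is strictly increasing until it stabilizes. -/
open Polynomial

noncomputable section

namespace Stmt16Aux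

variable {F : Type*} [Field F] {n : ℕ}

def mulSpan (C V : Submodule F (Fin n → F)) : Submodule F (Fin n → F) :=
  Submodule.span F {x | ∃ c ∈ C, ∃ d ∈ V, x = c * d}

lemma schurPow_succ (W : Submodule F (Fin n → F)) (t : ℕ) (ht : 1 ≤ t) :
    schurPow W (t+1) = mulSpan W (schurPow W t) := by
  obtain ⟨k, rfl⟩ : ∃ k, t = k + 1 := ⟨t - 1, by omega⟩
  rfl

def projP (P : Finset (Fin n)) : (Fin n → F) →ₗ[F] (Fin n → F) where
  toFun x := fun j => if j ∈ P then x j else 0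
  map_add' x y := by funext j; by_cases h : j ∈ P <;> simp [h]
  map_smul' a x := by funext j; by_cases h : j ∈ P <;> simp [h]

lemma projP_apply (P : Finset (Fin n)) (x : Fin n → F) (j : Fin n) :
    projP P x j = if j ∈ P then x j else 0 := rfl

def delta (i : Fin n) : Fin n → F := Pi.single i 1

lemma delta_apply (i j : Fin n) : (delta (F:=F) i) j = if j = i then 1 else 0 := by
  rw [delta, Pi.single_apply]

lemma projP_eq_sum (P : Finset (Fin n)) (x : Fin n → F) :
    projP P x = ∑ i ∈ P, x i • delta (F:=F) i := by
  classical
  funext j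
  rw [Finset.sum_apply]
  simp only [Pi.smul_apply, delta_apply, smul_eq_mul, mul_ite, mul_one, mul_zero]
  rw [Finset.sum_ite_eq P j x]
  rfl

lemma projP_single (P : Finset (Fin n)) {i : Fin n} (hi : i ∈ P) :
    projP P (delta (F:=F) i) = delta (F:=F) i := by
  classical
  funext j
  rw [projP_apply]
  by_cases hj : j ∈ P
  · simp [hj]
  · have : j ≠ i := fun h => hj (h ▸ hi)
    simp [hj, delta_apply, this]


lemma projP_mem_span (P : Finset (Fin n)) (x : Fin n → F) :
    projP P x ∈ Submodule.span F ((fun i => delta (F:=F) i) '' ↑P) := by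
  rw [projP_eq_sum]
  exact Submodule.sum_mem _ fun i hi =>
    Submodule.smul_mem _ _ (Submodule.subset_span ⟨i, hi, rfl⟩)

lemma indep_delta (P : Finset (Fin n)) :
    LinearIndependent F (fun i : {x // x ∈ P} => delta (F:=F) (i : Fin n)) := by
  classical
  have h := (Pi.basisFun F (Fin n)).linearIndependent
  have h2 := h.comp (fun i : {x // x ∈ P} => (i : Fin n)) Subtype.val_injective
  have : (fun i : {x // x ∈ P} => delta (F:=F) (i : Fin n))
      = (⇑(Pi.basisFun F (Fin n)) ∘ fun i : {x // x ∈ P} => (i : Fin n)) := by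
    funext i
    simp [Function.comp, Pi.basisFun_apply, delta]
  rw [this]
  exact h2

lemma finrank_le_card_of_inj (U : Submodule F (Fin n → F)) (P : Finset (Fin n))
    (ha : ∀ v ∈ U, projP P v = 0 → v = 0) :
    Module.finrank F U ≤ P.card := by
  classical
  set φ := (projP P).comp U.subtype with hφ
  have hker : LinearMap.ker φ = ⊥ := by
    ext x
    simp only [LinearMap.mem_ker, Submodule.mem_bot, hφ, LinearMap.comp_apply,
      Submodule.coe_subtype]
    constructor
    · intro h; exact Subtype.ext (ha x x.2 h)
    · rintro rfl; simp
  have h1 := LinearMap.finrank_range_add_finrank_ker φ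
  rw [hker, finrank_bot, add_zero] at h1
  rw [← h1]
  have hsub : LinearMap.range φ ≤ Submodule.span F ((fun i => delta (F:=F) i) '' ↑P) := by
    rintro x hx
    obtain ⟨u, rfl⟩ := hx
    exact projP_mem_span P (U.subtype u)
  refine le_trans (Submodule.finrank_mono hsub) ?_
  have h2 := finrank_span_finset_le_card (R := F) (P.image fun i => delta (F:=F) i)
  rw [Set.finrank, Finset.coe_image] at h2
  exact h2.trans (Finset.card_image_le)

lemma card_le_finrank_of_onto (U : Submodule F (Fin n → F)) (P : Finset (Fin n))
    (hb : ∀ i ∈ P, ∃ v ∈ U, projP P v = delta (F:=F) i) :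
    P.card ≤ Module.finrank F U := by
  classical
  choose! u huU huπ using hb
  have hli : LinearIndependent F (fun i : {x // x ∈ P} => (⟨u i, huU i i.2⟩ : U)) := by
    apply LinearIndependent.of_comp ((projP P).comp U.subtype)
    have : (⇑((projP P).comp U.subtype) ∘ fun i : {x // x ∈ P} => (⟨u i, huU i i.2⟩ : U))
        = fun i : {x // x ∈ P} => delta (F:=F) (i : Fin n) := by
      funext i
      simp [Function.comp, LinearMap.comp_apply, huπ i i.2]
    rw [this]
    exact indep_delta P
  have := hli.fintype_card_le_finrank
  simpa [Fintype.card_coe] using this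

lemma inj_of_onto_le (U : Submodule F (Fin n → F)) (P : Finset (Fin n))
    (hb : ∀ i ∈ P, ∃ v ∈ U, projP P v = delta (F:=F) i)
    (hle : Module.finrank F U ≤ P.card) :
    ∀ v ∈ U, projP P v = 0 → v = 0 := by
  classical
  set φ := (projP P).comp U.subtype with hφ
  have hb' : ∀ i ∈ P, ∃ x ∈ LinearMap.range φ, projP P x = delta (F:=F) i := by
    intro i hi
    obtain ⟨v, hvU, hvπ⟩ := hb i hi
    exact ⟨delta (F:=F) i, ⟨⟨v, hvU⟩, hvπ⟩, projP_single P hi⟩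
  have hrange : P.card ≤ Module.finrank F (LinearMap.range φ) :=
    card_le_finrank_of_onto _ _ hb'
  have h1 := LinearMap.finrank_range_add_finrank_ker φ
  have hker0 : Module.finrank F (LinearMap.ker φ) = 0 := by omega
  have hker : LinearMap.ker φ = ⊥ := Submodule.finrank_eq_zero.mp hker0
  intro v hv h0
  have : (⟨v, hv⟩ : U) ∈ LinearMap.ker φ := by
    simp only [LinearMap.mem_ker, hφ, LinearMap.comp_apply, Submodule.coe_subtype]
    exact h0
  rw [hker, Submodule.mem_bot] at this
  exact congrArg Subtype.val this


lemma exists_good (V : Submodule F (Fin n → F)) :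
    ∃ P : Finset (Fin n),
      (∀ v ∈ V, projP P v = 0 → v = 0) ∧
      (∀ i ∈ P, ∃ v ∈ V, projP P v = delta (F:=F) i) ∧
      (∀ i ∈ P, ∃ v ∈ V, v i ≠ 0) := by
  classical
  suffices h : ∀ (d : ℕ) (V : Submodule F (Fin n → F)), Module.finrank F V = d →
      ∃ P : Finset (Fin n),
      (∀ v ∈ V, projP P v = 0 → v = 0) ∧
      (∀ i ∈ P, ∃ v ∈ V, projP P v = delta (F:=F) i) ∧
      (∀ i ∈ P, ∃ v ∈ V, v i ≠ 0) by
    exact h _ V rfl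
  intro d
  induction d using Nat.strong_induction_on with
  | _ d ih =>
  intro V hdim
  by_cases hV : V = ⊥
  · refine ⟨∅, ?_, ?_, ?_⟩
    · intro v hv _
      rw [hV, Submodule.mem_bot] at hv
      exact hv
    · intro i hi; exact absurd hi (Finset.notMem_empty i)
    · intro i hi; exact absurd hi (Finset.notMem_empty i)
  · obtain ⟨v0, hv0V, hv0⟩ := Submodule.exists_mem_ne_zero_of_ne_bot hV
    obtain ⟨i0, hi0⟩ : ∃ i0, v0 i0 ≠ 0 := by
      by_contra h; push_neg at h; exact hv0 (funext h)
    set V0 := V ⊓ LinearMap.ker (LinearMap.proj (R := F) (φ := fun _ : Fin n => F) i0)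
      with hV0def
    have hmemV0 : ∀ x, x ∈ V0 ↔ x ∈ V ∧ x i0 = 0 := by
      intro x
      rw [hV0def, Submodule.mem_inf, LinearMap.mem_ker, LinearMap.proj_apply]
    have hlt : V0 < V := by
      refine lt_of_le_of_ne inf_le_left fun h => ?_
      have : v0 ∈ V0 := h ▸ hv0V
      exact hi0 ((hmemV0 v0).mp this).2
    have hrank : Module.finrank F V0 < d :=
      hdim ▸ Submodule.finrank_lt_finrank_of_lt hlt
    obtain ⟨P0, ha0, hb0, hs0⟩ := ih _ hrank V0 rfl
    have hi0P0 : i0 ∉ P0 := by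
      intro h
      obtain ⟨v, hv, hvi⟩ := hs0 i0 h
      exact hvi ((hmemV0 v).mp hv).2
    have hsplit : ∀ x : Fin n → F,
        projP (insert i0 P0) x = projP P0 x + x i0 • delta (F:=F) i0 := by
      intro x; funext j
      rw [Pi.add_apply, projP_apply, projP_apply, Pi.smul_apply, delta_apply, smul_eq_mul]
      by_cases hj : j = i0
      · subst hj; simp [hi0P0]
      · by_cases hj0 : j ∈ P0 <;> simp [Finset.mem_insert, hj, hj0]
    refine ⟨insert i0 P0, ?_, ?_, ?_⟩
    · intro v hv h0
      have hvi0 : v i0 = 0 := by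
        have := congrFun h0 i0
        rwa [projP_apply, if_pos (Finset.mem_insert_self i0 P0)] at this
      have hvV0 : v ∈ V0 := (hmemV0 v).mpr ⟨hv, hvi0⟩
      apply ha0 v hvV0
      funext j
      rw [projP_apply]
      by_cases hj : j ∈ P0
      · have := congrFun h0 j
        rw [projP_apply, if_pos (Finset.mem_insert_of_mem hj)] at this
        simp [hj, this]
      · simp [hj]
    · intro i hi
      rcases Finset.mem_insert.mp hi with rfl | hiP0
      · set w : Fin n → F := (v0 i)⁻¹ • v0 with hw
        have hwV : w ∈ V := Submodule.smul_mem _ _ hv0V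
        choose! u huV0 huπ using hb0
        set u0 : Fin n → F := ∑ j ∈ P0, w j • u j with hu0
        have hu0V0 : u0 ∈ V0 :=
          Submodule.sum_mem _ fun j hj => Submodule.smul_mem _ _ (huV0 j hj)
        have hu0π : projP P0 u0 = projP P0 w := by
          rw [hu0, map_sum, projP_eq_sum P0 w]
          refine Finset.sum_congr rfl fun j hj => ?_
          rw [map_smul, huπ j hj]
        refine ⟨w - u0, Submodule.sub_mem _ hwV ((inf_le_left : V0 ≤ V) hu0V0), ?_⟩
        rw [map_sub, hsplit w, hsplit u0, hu0π]
        have hui0 : u0 i = 0 := ((hmemV0 u0).mp hu0V0).2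
        have hwi0 : w i = 1 := by
          rw [hw, Pi.smul_apply, smul_eq_mul, inv_mul_cancel₀ hi0]
        rw [hui0, hwi0]
        module
      · obtain ⟨vv, hvv, hvvπ⟩ := hb0 i hiP0
        have hvi0 : vv i0 = 0 := ((hmemV0 vv).mp hvv).2
        refine ⟨vv, (inf_le_left : V0 ≤ V) hvv, ?_⟩
        rw [hsplit vv, hvvπ, hvi0]
        module
    · intro i hi
      rcases Finset.mem_insert.mp hi with rfl | hiP0
      · exact ⟨v0, hv0V, hi0⟩
      · obtain ⟨vv, hvv, hvvi⟩ := hs0 i hiP0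
        exact ⟨vv, (inf_le_left : V0 ≤ V) hvv, hvvi⟩


lemma pb_mulSpan (C U : Submodule F (Fin n → F)) (P : Finset (Fin n))
    (hC : ∀ i ∈ P, ∃ c ∈ C, c i ≠ 0)
    (hb : ∀ i ∈ P, ∃ v ∈ U, projP P v = delta (F:=F) i) :
    ∀ i ∈ P, ∃ x ∈ mulSpan C U, projP P x = delta (F:=F) i := by
  classical
  intro i hi
  obtain ⟨v, hvU, hvπ⟩ := hb i hi
  obtain ⟨c, hcC, hci⟩ := hC i hi
  refine ⟨(c i)⁻¹ • (c * v),
    Submodule.smul_mem _ _ (Submodule.subset_span ⟨c, hcC, v, hvU, rfl⟩), ?_⟩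
  have hkey : projP P (c * v) = c i • delta (F:=F) i := by
    funext j
    rw [projP_apply, Pi.smul_apply, delta_apply, smul_eq_mul]
    by_cases hj : j ∈ P
    · rw [if_pos hj, Pi.mul_apply]
      have hvj : v j = if j = i then 1 else 0 := by
        have := congrFun hvπ j
        rwa [projP_apply, if_pos hj, delta_apply] at this
      rw [hvj]
      by_cases h : j = i
      · subst h; simp
      · simp [h]
    · rw [if_neg hj]
      have : j ≠ i := fun h => hj (h ▸ hi)
      simp [this]
  rw [map_smul, hkey, smul_smul, inv_mul_cancel₀ hci, one_smul]

lemma schurPow_supp (W : Submodule F (Fin n → F)) (t : ℕ) (ht : 1 ≤ t) (i : Fin n)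
    (h : ∀ c ∈ W, c i = 0) : ∀ x ∈ schurPow W t, x i = 0 := by
  obtain ⟨k, rfl⟩ : ∃ k, t = k + 1 := ⟨t - 1, by omega⟩
  cases k with
  | zero => exact h
  | succ k =>
    intro x hx
    have hle : schurPow W (k+2) ≤
        LinearMap.ker (LinearMap.proj (R := F) (φ := fun _ : Fin n => F) i) := by
      show Submodule.span F {x | ∃ c ∈ W, ∃ d ∈ schurPow W (k+1), x = c * d} ≤ _
      rw [Submodule.span_le]
      rintro y ⟨c, hc, d, hd, rfl⟩
      simp only [SetLike.mem_coe, LinearMap.mem_ker, LinearMap.proj_apply, Pi.mul_apply,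
        h c hc, zero_mul]
    have := hle hx
    rwa [LinearMap.mem_ker, LinearMap.proj_apply] at this

lemma plateau_core (C V : Submodule F (Fin n → F)) (P : Finset (Fin n))
    (hC : ∀ i ∈ P, ∃ c ∈ C, c i ≠ 0)
    (hVb : ∀ i ∈ P, ∃ v ∈ V, projP P v = delta (F:=F) i)
    (hWa : ∀ w ∈ mulSpan C V, projP P w = 0 → w = 0) :
    Module.finrank F (mulSpan C (mulSpan C V)) ≤ P.card := by
  classical
  set W := mulSpan C V with hWdef
  -- a left inverse of the projection on W
  have hker : LinearMap.ker ((projP P).comp W.subtype) = ⊥ := by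
    ext w
    simp only [LinearMap.mem_ker, LinearMap.comp_apply, Submodule.mem_bot,
      Submodule.coe_subtype]
    constructor
    · intro hh; exact Subtype.ext (hWa w w.2 hh)
    · rintro rfl; simp
  obtain ⟨g, hg⟩ := LinearMap.exists_leftInverse_of_injective _ hker
  set B : (Fin n → F) →ₗ[F] (Fin n → F) := W.subtype.comp g with hB
  have hBw : ∀ w ∈ W, B (projP P w) = w := by
    intro w hw
    have h2 := LinearMap.congr_fun hg (⟨w, hw⟩ : W)
    simp only [LinearMap.comp_apply, LinearMap.id_apply] at h2
    have : B (projP P w) = W.subtype (g (projP P w)) := rfl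
    rw [this]
    exact congrArg _ h2
  -- expansion of elements of W in terms of their P coordinates
  have hWexp : ∀ w ∈ W, ∀ ℓ : Fin n, w ℓ = ∑ i ∈ P, w i * (B (delta (F:=F) i)) ℓ := by
    intro w hw ℓ
    calc w ℓ = B (projP P w) ℓ := by rw [hBw w hw]
    _ = (∑ i ∈ P, B (w i • delta (F:=F) i)) ℓ := by rw [projP_eq_sum, map_sum]
    _ = (∑ i ∈ P, w i • B (delta (F:=F) i)) ℓ := by
        exact congrArg (fun t => t ℓ)
          (Finset.sum_congr rfl fun i _ => map_smul B (w i) (delta (F:=F) i))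
    _ = ∑ i ∈ P, w i * B (delta (F:=F) i) ℓ := by
        rw [Finset.sum_apply]
        rfl
  choose! v hvV hvπ using hVb
  choose! cc hccC hcci using hC
  -- the key relation
  have hdagger : ∀ c' ∈ C, ∀ i ∈ P, ∀ ℓ : Fin n,
      c' ℓ * v i ℓ = c' i * (B (delta (F:=F) i)) ℓ := by
    intro c' hc' i hi ℓ
    have hcv : c' * v i ∈ W := Submodule.subset_span ⟨c', hc', v i, hvV i hi, rfl⟩
    have h1 := hWexp (c' * v i) hcv ℓ
    rw [Pi.mul_apply] at h1
    have hcoord : ∀ i' ∈ P, (c' * v i) i' * (B (delta (F:=F) i')) ℓ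
        = if i' = i then c' i * (B (delta (F:=F) i)) ℓ else 0 := by
      intro i' hi'
      have hv_coord : v i i' = if i' = i then 1 else 0 := by
        have := congrFun (hvπ i hi) i'
        rwa [projP_apply, if_pos hi', delta_apply] at this
      rw [Pi.mul_apply, hv_coord]
      by_cases hii : i' = i
      · subst hii; simp
      · simp [hii]
    rw [h1, Finset.sum_congr rfl hcoord, Finset.sum_ite_eq' P i
      (fun _ => c' i * (B (delta (F:=F) i)) ℓ), if_pos hi]
  have hbeta0 : ∀ i ∈ P, ∀ ℓ : Fin n, v i ℓ = 0 → (B (delta (F:=F) i)) ℓ = 0 := by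
    intro i hi ℓ h0
    have hd := hdagger (cc i) (hccC i hi) i hi ℓ
    rw [h0, mul_zero] at hd
    exact (mul_eq_zero.mp hd.symm).resolve_left (hcci i hi)
  -- the coefficient matrix of the second product code
  set d : Fin n → Fin n → F := fun ℓ i =>
    if v i ℓ = 0 then 0 else (B (delta (F:=F) i)) ℓ * (B (delta (F:=F) i)) ℓ / v i ℓ
    with hd_def
  have hT : ∀ c' ∈ C, ∀ i ∈ P, ∀ ℓ : Fin n,
      c' ℓ * (B (delta (F:=F) i)) ℓ = d ℓ i * c' i := by
    intro c' hc' i hi ℓ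
    by_cases h0 : v i ℓ = 0
    · rw [hd_def]
      simp only [h0, if_true]
      rw [hbeta0 i hi ℓ h0, mul_zero, zero_mul]
    · have hdg := hdagger c' hc' i hi ℓ
      rw [hd_def]
      simp only [h0, if_false]
      rw [div_mul_eq_mul_div, eq_div_iff h0]
      calc c' ℓ * B (delta (F:=F) i) ℓ * v i ℓ
          = (c' ℓ * v i ℓ) * B (delta (F:=F) i) ℓ := by ring
        _ = (c' i * B (delta (F:=F) i) ℓ) * B (delta (F:=F) i) ℓ := by rw [hdg]
        _ = B (delta (F:=F) i) ℓ * B (delta (F:=F) i) ℓ * c' i := by ring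
  -- the fixed space
  set E : (Fin n → F) →ₗ[F] (Fin n → F) :=
    { toFun := fun x ℓ => ∑ i ∈ P, d ℓ i * x i
      map_add' := by
        intro x y; funext ℓ
        simp [Pi.add_apply, mul_add, Finset.sum_add_distrib]
      map_smul' := by
        intro a x; funext ℓ
        simp [Finset.mul_sum, smul_eq_mul]
        ring_nf
        simp [mul_assoc, mul_comm, mul_left_comm] } with hE_def
  have hE_apply : ∀ x ℓ, E x ℓ = ∑ i ∈ P, d ℓ i * x i := fun x ℓ => rfl
  have hFix : mulSpan C W ≤ LinearMap.ker (E - LinearMap.id) := by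
    rw [mulSpan, Submodule.span_le]
    rintro x ⟨c', hc', w, hw, rfl⟩
    simp only [SetLike.mem_coe, LinearMap.mem_ker, LinearMap.sub_apply, LinearMap.id_apply,
      sub_eq_zero]
    funext ℓ
    rw [hE_apply]
    have : ∀ i ∈ P, d ℓ i * (c' * w) i = c' ℓ * (w i * (B (delta (F:=F) i)) ℓ) := by
      intro i hi
      rw [Pi.mul_apply]
      calc d ℓ i * (c' i * w i) = (d ℓ i * c' i) * w i := by ring
        _ = (c' ℓ * (B (delta (F:=F) i)) ℓ) * w i := by rw [hT c' hc' i hi ℓ]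
        _ = c' ℓ * (w i * (B (delta (F:=F) i)) ℓ) := by ring
    rw [Finset.sum_congr rfl this, ← Finset.mul_sum, Pi.mul_apply, ← hWexp w hw ℓ]
  have hFixInj : ∀ x ∈ LinearMap.ker (E - LinearMap.id), projP P x = 0 → x = 0 := by
    intro x hx h0
    have hEx : E x = x := by
      have := hx
      rw [LinearMap.mem_ker, LinearMap.sub_apply, LinearMap.id_apply, sub_eq_zero] at this
      exact this
    funext ℓ
    have hxi : ∀ i ∈ P, x i = 0 := by
      intro i hi
      have := congrFun h0 i
      rwa [projP_apply, if_pos hi] at this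
    calc x ℓ = E x ℓ := by rw [hEx]
      _ = ∑ i ∈ P, d ℓ i * x i := hE_apply x ℓ
      _ = 0 := Finset.sum_eq_zero fun i hi => by rw [hxi i hi, mul_zero]
  have h1 : Module.finrank F (mulSpan C W) ≤
      Module.finrank F (LinearMap.ker (E - LinearMap.id)) :=
    Submodule.finrank_mono hFix
  exact h1.trans (finrank_le_card_of_inj _ _ hFixInj)

end Stmt16Aux

open Stmt16Aux in
/-- If r is the Castelnuovo–Mumford regularity of a nonzero linear code C
(the least r with dim C^{⟨r⟩} = dim C^{⟨r+i⟩} for all i), then the dimension sequence is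
strictly increasing before r: for 1 ≤ z ≤ r - 1, dim C^{⟨z⟩} < dim C^{⟨z+1⟩}. -/
theorem stmt16 {F : Type*} [Field F] [Fintype F] {n : ℕ}
    (W : Submodule F (Fin n → F)) (hW : W ≠ ⊥) (r : ℕ)
    (hr : IsLeast {s : ℕ | ∀ i : ℕ,
      Module.finrank F (schurPow W s) = Module.finrank F (schurPow W (s + i))} r) :
    ∀ z : ℕ, 1 ≤ z → z ≤ r - 1 →
      Module.finrank F (schurPow W z) < Module.finrank F (schurPow W (z + 1)) := by
  classical
  intro z hz1 hz2
  obtain ⟨P, ha, hb, hsupp⟩ := exists_good (F := F) (schurPow W z)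
  have hC : ∀ i ∈ P, ∃ c ∈ W, c i ≠ 0 := by
    intro i hi
    by_contra hcon
    push_neg at hcon
    have h0 : ∀ c ∈ W, c i = 0 := fun c hc => hcon c hc
    obtain ⟨v, hv, hvi⟩ := hsupp i hi
    exact hvi (schurPow_supp W z hz1 i h0 v hv)
  have hcard : Module.finrank F (schurPow W z) = P.card :=
    le_antisymm (finrank_le_card_of_inj _ _ ha) (card_le_finrank_of_onto _ _ hb)
  have hbsucc : ∀ i ∈ P, ∃ x ∈ schurPow W (z+1), projP P x = delta (F:=F) i := by
    rw [schurPow_succ W z hz1]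
    exact pb_mulSpan _ _ _ hC hb
  have hmono : Module.finrank F (schurPow W z) ≤ Module.finrank F (schurPow W (z+1)) := by
    rw [hcard]
    exact card_le_finrank_of_onto _ _ hbsucc
  rcases lt_or_eq_of_le hmono with hlt | heq
  · exact hlt
  · exfalso
    have key : ∀ i : ℕ,
        ((∀ j ∈ P, ∃ x ∈ schurPow W (z+i), projP P x = delta (F:=F) j) ∧
          Module.finrank F (schurPow W (z+i)) = P.card)
        ∧ ((∀ j ∈ P, ∃ x ∈ schurPow W (z+i+1), projP P x = delta (F:=F) j) ∧
          Module.finrank F (schurPow W (z+i+1)) = P.card) := by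
      intro i
      induction i with
      | zero =>
        refine ⟨⟨hb, hcard⟩, ⟨hbsucc, ?_⟩⟩
        show Module.finrank F (schurPow W (z+1)) = P.card
        rw [← heq]
        exact hcard
      | succ i ihp =>
        obtain ⟨⟨hbV, hrV⟩, ⟨hbW, hrW⟩⟩ := ihp
        have hWa : ∀ w ∈ schurPow W (z+i+1), projP P w = 0 → w = 0 :=
          inj_of_onto_le _ _ hbW (le_of_eq hrW)
        have heq1 : schurPow W (z+i+1) = mulSpan W (schurPow W (z+i)) :=
          schurPow_succ W (z+i) (by omega)
        have heq2 : schurPow W (z+i+2) = mulSpan W (schurPow W (z+i+1)) :=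
          schurPow_succ W (z+i+1) (by omega)
        have hb2 : ∀ j ∈ P, ∃ x ∈ schurPow W (z+i+2), projP P x = delta (F:=F) j := by
          rw [heq2, heq1]
          exact pb_mulSpan _ _ _ hC (heq1 ▸ hbW)
        have hle2 : Module.finrank F (schurPow W (z+i+2)) ≤ P.card := by
          rw [heq2, heq1]
          exact plateau_core W (schurPow W (z+i)) P hC hbV (heq1 ▸ hWa)
        exact ⟨⟨hbW, hrW⟩, ⟨hb2,
          le_antisymm hle2 (card_le_finrank_of_onto _ _ hb2)⟩⟩
    have hmem : ∀ i : ℕ,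
        Module.finrank F (schurPow W z) = Module.finrank F (schurPow W (z + i)) :=
      fun i => hcard.trans ((key i).1.2).symm
    have hrle : r ≤ z := hr.2 hmem
    omega
end
end

section
/- Let C ⊆ F^n be a linear code and z ≥ 1. If C^{⟨z⟩} is spanned by a basis of codewords with pairwise disjoint supports, then dim(C^{⟨z⟩}) = dim(C^{⟨z+1⟩}). -/
open Polynomial

noncomputable section

lemma schurPow_two_def {F : Type*} [Field F] {n : ℕ} (W : Submodule F (Fin n → F)) (x : ℕ) :
    schurPow W (x + 1 + 1) =
      Submodule.span F {v | ∃ c ∈ W, ∃ d ∈ schurPow W (x + 1), v = c * d} := rfl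

lemma mul_pow_mem {F : Type*} [Field F] {n : ℕ} (W : Submodule F (Fin n → F)) :
    ∀ (x : ℕ) (c c' : Fin n → F), c ∈ W → c' ∈ W → c * c' ^ x ∈ schurPow W (x + 1)
  | 0, c, c', hc, _ => by simpa using (show c ∈ schurPow W 1 from hc)
  | (x+1), c, c', hc, hc' => by
      have h : c * c' ^ (x + 1) = c' * (c * c' ^ x) := by ring
      rw [h]
      exact Submodule.subset_span ⟨c', hc', _, mul_pow_mem W x c c' hc hc', rfl⟩

/-- If C^{⟨z⟩} (z ≥ 1) is spanned by a basis of codewords with pairwise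
disjoint supports, then dim C^{⟨z⟩} = dim C^{⟨z+1⟩}. -/
theorem stmt17 {F : Type*} [Field F] [Fintype F] {n : ℕ}
    (W : Submodule F (Fin n → F)) (z : ℕ) (hz : 1 ≤ z)
    (hbasis : ∃ (k : ℕ) (b : Fin k → Fin n → F),
      LinearIndependent F b ∧
      Submodule.span F (Set.range b) = schurPow W z ∧
      ∀ i j : Fin k, i ≠ j → ∀ m : Fin n, b i m = 0 ∨ b j m = 0) :
    Module.finrank F (schurPow W z) = Module.finrank F (schurPow W (z + 1)) := by
  obtain ⟨k, b, hli, hspan, hdisj⟩ := hbasis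
  obtain ⟨x, rfl⟩ : ∃ x, z = x + 1 := ⟨z - 1, by omega⟩
  -- every element of C^⟨z⟩ is proportional to b i on the support of b i
  have hA : ∀ v ∈ schurPow W (x + 1), ∀ i : Fin k,
      ∃ μ : F, ∀ m, b i m ≠ 0 → v m = μ * b i m := by
    intro v hv i
    rw [← hspan, Submodule.mem_span_range_iff_exists_fun] at hv
    obtain ⟨f, hf⟩ := hv
    refine ⟨f i, fun m hm => ?_⟩
    rw [← hf]
    simp only [Finset.sum_apply, Pi.smul_apply, smul_eq_mul]
    rw [Finset.sum_eq_single i]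
    · intro j _ hj
      rcases hdisj j i hj m with h | h
      · simp [h]
      · exact absurd h hm
    · simp
  have hb_mem : ∀ i, b i ∈ schurPow W (x + 1) := fun i =>
    hspan ▸ Submodule.subset_span ⟨i, rfl⟩
  have hbne : ∀ i, b i ≠ 0 := fun i => hli.ne_zero i
  choose m₀ hm₀' using fun i => Function.ne_iff.mp (hbne i)
  have hm₀ : ∀ i, b i (m₀ i) ≠ 0 := fun i => by simpa using hm₀' i
  -- for each i there is a codeword of W not vanishing at m₀ i
  have hcw_ex : ∀ i : Fin k, ∃ c, c ∈ W ∧ c (m₀ i) ≠ 0 := by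
    intro i
    by_contra hcon
    push_neg at hcon
    have key : ∀ y : ℕ, schurPow W (y + 1) ≤
        LinearMap.ker (LinearMap.proj (R := F) (φ := fun _ : Fin n => F) (m₀ i)) := by
      intro y
      induction y with
      | zero =>
        intro v hv
        simpa [LinearMap.mem_ker] using hcon v hv
      | succ y ih =>
        rw [schurPow_two_def]
        apply Submodule.span_le.mpr
        rintro v ⟨c, hc, d, hd, rfl⟩
        simp [LinearMap.mem_ker, hcon c hc]
    have := key x (hb_mem i)
    simp [LinearMap.mem_ker] at this
    exact hm₀ i this
  choose cw hcwW hcwne using hcw_ex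
  -- every codeword of W is proportional to cw i on the support of b i
  have hC : ∀ (w : Fin n → F), w ∈ W → ∀ i m, b i m ≠ 0 →
      w m * cw i (m₀ i) = w (m₀ i) * cw i m := by
    intro w hw i m hm
    obtain ⟨μ1, h1⟩ := hA (w * cw i ^ x) (mul_pow_mem W x w (cw i) hw (hcwW i)) i
    obtain ⟨μ2, h2⟩ := hA (cw i * cw i ^ x) (mul_pow_mem W x (cw i) (cw i) (hcwW i) (hcwW i)) i
    have e1m : w m * cw i m ^ x = μ1 * b i m := by simpa using h1 m hm
    have e1m0 : w (m₀ i) * cw i (m₀ i) ^ x = μ1 * b i (m₀ i) := by simpa using h1 _ (hm₀ i)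
    have e2m : cw i m * cw i m ^ x = μ2 * b i m := by simpa using h2 m hm
    have e2m0 : cw i (m₀ i) * cw i (m₀ i) ^ x = μ2 * b i (m₀ i) := by simpa using h2 _ (hm₀ i)
    have hA' : w m * cw i m ^ x * b i (m₀ i) = w (m₀ i) * cw i (m₀ i) ^ x * b i m := by
      linear_combination b i (m₀ i) * e1m - b i m * e1m0
    have hB' : cw i m * cw i m ^ x * b i (m₀ i) = cw i (m₀ i) * cw i (m₀ i) ^ x * b i m := by
      linear_combination b i (m₀ i) * e2m - b i m * e2m0
    have ha : cw i m ≠ 0 := by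
      intro h
      have h0 : cw i (m₀ i) * cw i (m₀ i) ^ x * b i m = 0 := by
        rw [← hB', h, zero_mul, zero_mul]
      exact (mul_ne_zero (mul_ne_zero (hcwne i) (pow_ne_zero x (hcwne i))) hm) h0
    apply mul_right_cancel₀ (mul_ne_zero (pow_ne_zero x ha) (hm₀ i))
    linear_combination cw i (m₀ i) * hA' - w (m₀ i) * hB'
  set g : Fin k → Fin n → F := fun i => cw i * b i with hg
  have hgapp : ∀ i m, g i m = cw i m * b i m := fun _ _ => rfl
  have hg_mem : ∀ i, g i ∈ schurPow W (x + 1 + 1) := fun i =>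
    Submodule.subset_span ⟨cw i, hcwW i, b i, hb_mem i, rfl⟩
  have hkey : ∀ c, c ∈ W → ∀ j, c * b j = (c (m₀ j) / cw j (m₀ j)) • g j := by
    intro c hc j
    funext m
    simp only [Pi.mul_apply, Pi.smul_apply, smul_eq_mul, hgapp]
    by_cases hbm : b j m = 0
    · simp [hbm]
    · have hc' := hC c hc j m hbm
      field_simp [hcwne j]
      linear_combination hc'
  have hspan2 : Submodule.span F (Set.range g) = schurPow W (x + 1 + 1) := by
    apply le_antisymm
    · rw [Submodule.span_le]
      rintro _ ⟨i, rfl⟩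
      exact hg_mem i
    · rw [schurPow_two_def]
      apply Submodule.span_le.mpr
      rintro v ⟨c, hc, d, hd, rfl⟩
      rw [← hspan, Submodule.mem_span_range_iff_exists_fun] at hd
      obtain ⟨f, rfl⟩ := hd
      have heq : c * ∑ j, f j • b j = ∑ j, (f j * (c (m₀ j) / cw j (m₀ j))) • g j := by
        rw [Finset.mul_sum]
        refine Finset.sum_congr rfl fun j _ => ?_
        rw [mul_smul_comm, hkey c hc j, smul_smul]
      rw [heq]
      exact Submodule.sum_mem _ fun j _ =>
        Submodule.smul_mem _ _ (Submodule.subset_span ⟨j, rfl⟩)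
  have hgne : ∀ i, g i (m₀ i) ≠ 0 := fun i => mul_ne_zero (hcwne i) (hm₀ i)
  have hgli : LinearIndependent F g := by
    rw [Fintype.linearIndependent_iff]
    intro f hf i
    have h := congrFun hf (m₀ i)
    simp only [Finset.sum_apply, Pi.smul_apply, smul_eq_mul, Pi.zero_apply] at h
    rw [Finset.sum_eq_single i] at h
    · rcases mul_eq_zero.mp h with h' | h'
      · exact h'
      · exact absurd h' (hgne i)
    · intro j _ hj
      rcases hdisj j i hj (m₀ i) with h' | h'
      · simp [hgapp, h']
      · exact absurd h' (hm₀ i)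
    · simp
  show Module.finrank F (schurPow W (x + 1)) = Module.finrank F (schurPow W (x + 1 + 1))
  rw [← hspan, ← hspan2, finrank_span_eq_card hli, finrank_span_eq_card hgli]
end
end
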